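/- arXiv:2203.11763 — 5 statements merged into one kernel-verified Lean document; each statement's English description precedes it below -/
import Mathlib

section
/- Let Ω = [0,1]. A finitely supported function μ : ℝ → ℕ whose support H = {h : μ(h) ≥ 1} is contained in the open interval (0,1) is the breakpoint configuration of some Ω-tropical polynomial if and only if the sum Σ_{h ∈ H} μ(h)·h is an integer. -/
open Classical MeasureTheory Function Set

/-- An `Ω`-tropical polynomial on `Ω = [0,1]`: a function vanishing at `0` and `1`,
nonnegative on `[0,1]`, which on `[0,1]` is the minimum of finitely many affine
functions `x ↦ a_v + v·x` with integer slopes `v`. -/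
def IsTropPoly (F : ℝ → ℝ) : Prop :=
  F 0 = 0 ∧ F 1 = 0 ∧ (∀ x ∈ Set.Icc (0 : ℝ) 1, 0 ≤ F x) ∧
    ∃ s : Finset (ℤ × ℝ), ∃ hs : s.Nonempty,
      ∀ x ∈ Set.Icc (0 : ℝ) 1, F x = s.inf' hs fun va => va.2 + (va.1 : ℝ) * x

/-- `μ` is the breakpoint configuration of `F`: at every `h ∈ (0,1)`, the value `μ h`
is the downward jump `F'(h−) − F'(h+)` of the derivative of `F` at `h`. -/
def IsBreakpointConfig (F : ℝ → ℝ) (μ : ℝ → ℕ) : Prop :=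
  ∀ h ∈ Set.Ioo (0 : ℝ) 1, ∃ dl dr : ℝ,
    HasDerivWithinAt F dl (Set.Iio h) h ∧ HasDerivWithinAt F dr (Set.Ioi h) h ∧
      (μ h : ℝ) = dl - dr


open Classical MeasureTheory Function Set
open Filter Topology

/-- Continuity of a finite inf' of affine functions. -/
lemma trop_continuous_inf' (s : Finset (ℤ × ℝ)) (hs : s.Nonempty) :
    Continuous fun x : ℝ => s.inf' hs fun p => p.2 + (p.1 : ℝ) * x := by
  induction hs using Finset.Nonempty.cons_induction with
  | singleton a =>
      simp only [Finset.inf'_singleton]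
      exact continuous_const.add (continuous_const.mul continuous_id)
  | cons a s ha hs ih =>
      have : ∀ x : ℝ, ((Finset.cons a s ha).inf' (Finset.cons_nonempty ha)
          fun p => p.2 + (p.1 : ℝ) * x)
          = min (a.2 + (a.1 : ℝ) * x) (s.inf' hs fun p => p.2 + (p.1 : ℝ) * x) := by
        intro x; rw [Finset.inf'_cons hs]
      simp only [this]
      exact ((continuous_const.add (continuous_const.mul continuous_id)).min ih)

lemma trop_inf'_congr_set {α β : Type*} [SemilatticeInf α] {s₁ s₂ : Finset β} (h : s₁ = s₂)
    (hs : s₁.Nonempty) (f : β → α) : s₁.inf' hs f = s₂.inf' (h ▸ hs) f := by subst h; rfl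

lemma trop_sum_min_eq_inf'_powerset (t : Finset ℝ) (f g : ℝ → ℝ) :
    ∑ h ∈ t, min (f h) (g h) =
      t.powerset.inf' (Finset.powerset_nonempty t)
        (fun S => (∑ h ∈ S, g h) + ∑ h ∈ t \ S, f h) := by
  classical
  induction t using Finset.induction with
  | empty => simp
  | insert _ _ ha ih =>
      rename_i a t
      rw [Finset.sum_insert ha, ih]
      have hup : (insert a t).powerset = t.powerset ∪ t.powerset.image (insert a) :=
        Finset.powerset_insert t a
      have h1 : t.powerset.Nonempty := Finset.powerset_nonempty t
      have h2 : (t.powerset.image (insert a)).Nonempty := h1.image _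
      have hrw : ((insert a t).powerset).inf' (Finset.powerset_nonempty _)
          (fun S => (∑ h ∈ S, g h) + ∑ h ∈ insert a t \ S, f h)
          = (t.powerset.inf' h1 (fun S => (∑ h ∈ S, g h) + ∑ h ∈ insert a t \ S, f h)) ⊓
            ((t.powerset.image (insert a)).inf' h2
              (fun S => (∑ h ∈ S, g h) + ∑ h ∈ insert a t \ S, f h)) := by
        rw [trop_inf'_congr_set hup, Finset.inf'_union h1 h2]
      rw [hrw]
      have e1 : ∀ S ∈ t.powerset,
          (∑ h ∈ S, g h) + ∑ h ∈ insert a t \ S, f h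
            = f a + ((∑ h ∈ S, g h) + ∑ h ∈ t \ S, f h) := by
        intro S hS
        have hSt : S ⊆ t := Finset.mem_powerset.1 hS
        have haS : a ∉ S := fun h => ha (hSt h)
        have : insert a t \ S = insert a (t \ S) := by
          ext x; simp only [Finset.mem_sdiff, Finset.mem_insert]
          constructor
          · rintro ⟨h1 | h1, h2⟩
            · exact Or.inl h1
            · exact Or.inr ⟨h1, h2⟩
          · rintro (rfl | ⟨h1, h2⟩)
            · exact ⟨Or.inl rfl, haS⟩
            · exact ⟨Or.inr h1, h2⟩
        rw [this, Finset.sum_insert (by simp [ha])]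
        ring
      have e2 : ∀ S ∈ t.powerset,
          (∑ h ∈ insert a S, g h) + ∑ h ∈ insert a t \ insert a S, f h
            = g a + ((∑ h ∈ S, g h) + ∑ h ∈ t \ S, f h) := by
        intro S hS
        have hSt : S ⊆ t := Finset.mem_powerset.1 hS
        have haS : a ∉ S := fun h => ha (hSt h)
        have : insert a t \ insert a S = t \ S := by
          ext x; simp only [Finset.mem_sdiff, Finset.mem_insert]
          constructor
          · rintro ⟨h1 | h1, h2⟩
            · exact absurd (Or.inl h1) h2
            · exact ⟨h1, fun hx => h2 (Or.inr hx)⟩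
          · rintro ⟨h1, h2⟩
            exact ⟨Or.inr h1, by rintro (rfl | hx); exacts [ha h1, h2 hx]⟩
        rw [this, Finset.sum_insert haS]
        ring
      rw [Finset.inf'_congr h1 rfl e1]
      have himg : (t.powerset.image (insert a)).inf' h2
          (fun S => (∑ h ∈ S, g h) + ∑ h ∈ insert a t \ S, f h)
          = t.powerset.inf' h1
            (fun S => (∑ h ∈ insert a S, g h) + ∑ h ∈ insert a t \ insert a S, f h) := by
        rw [Finset.inf'_image]; rfl
      rw [himg, Finset.inf'_congr h1 rfl e2]
      have hc1 : t.powerset.inf' h1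
          (fun S => f a + ((∑ h ∈ S, g h) + ∑ h ∈ t \ S, f h))
          = f a + t.powerset.inf' h1 (fun S => (∑ h ∈ S, g h) + ∑ h ∈ t \ S, f h) := by
        rw [Finset.apply_inf'_eq_inf'_comp h1 (fun y => f a + y) (fun x y => by
          exact (min_add_add_left (f a) x y).symm)]
        rfl
      have hc2 : t.powerset.inf' h1
          (fun S => g a + ((∑ h ∈ S, g h) + ∑ h ∈ t \ S, f h))
          = g a + t.powerset.inf' h1 (fun S => (∑ h ∈ S, g h) + ∑ h ∈ t \ S, f h) := by
        rw [Finset.apply_inf'_eq_inf'_comp h1 (fun y => g a + y) (fun x y => by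
          exact (min_add_add_left (g a) x y).symm)]
        rfl
      rw [hc1, hc2]
      rw [min_add_add_right]

section Back

open Filter Topology

lemma trop_mul_min (c a b : ℝ) (hc : 0 ≤ c) : c * min a b = min (c * a) (c * b) := by
  rcases le_total a b with h | h
  · rw [min_eq_left h, min_eq_left (mul_le_mul_of_nonneg_left h hc)]
  · rw [min_eq_right h, min_eq_right (mul_le_mul_of_nonneg_left h hc)]

lemma trop_hasDerivAt_lin (c x : ℝ) : HasDerivAt (fun y : ℝ => c * y) c x := by
  simpa using (hasDerivAt_id x).const_mul c

lemma trop_hasDerivAt_lin' (c x : ℝ) : HasDerivAt (fun y : ℝ => c * (1 - y)) (-c) x := by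
  have := ((hasDerivAt_id x).const_sub 1).const_mul c
  simpa using this

/-- the per-term function of our canonical construction -/
lemma trop_term_left (c h y : ℝ) (hy : y ≤ h) :
    c * min ((1 - h) * y) (h * (1 - y)) = c * ((1 - h) * y) := by
  congr 1
  apply min_eq_left
  nlinarith [hy]

lemma trop_term_right (c h y : ℝ) (hy : h ≤ y) :
    c * min ((1 - h) * y) (h * (1 - y)) = c * (h * (1 - y)) := by
  congr 1
  apply min_eq_right
  nlinarith [hy]

theorem trop_backward (μ : ℝ → ℕ) (hfin : (Function.support μ).Finite)
    (hsub : Function.support μ ⊆ Set.Ioo (0 : ℝ) 1) (z : ℤ)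
    (hz : (∑ᶠ h, (μ h : ℝ) * h) = (z : ℝ)) :
    ∃ F : ℝ → ℝ, IsTropPoly F ∧ IsBreakpointConfig F μ := by
  classical
  set t : Finset ℝ := hfin.toFinset with ht
  have hmem : ∀ h ∈ t, h ∈ Set.Ioo (0:ℝ) 1 := fun h hh => hsub (hfin.mem_toFinset.1 hh)
  have hzt : ∑ h ∈ t, (μ h : ℝ) * h = (z : ℝ) := by
    rw [← hz]
    symm
    apply finsum_eq_sum_of_support_subset
    intro h hh
    simp only [Function.mem_support] at hh
    rw [ht, Set.Finite.coe_toFinset]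
    intro h0
    exact hh (by rw [h0]; simp)
  set F : ℝ → ℝ := fun x => ∑ h ∈ t, (μ h : ℝ) * min ((1 - h) * x) (h * (1 - x)) with hF
  refine ⟨F, ⟨?_, ?_, ?_, ?_⟩, ?_⟩
  · -- F 0 = 0
    rw [hF]
    apply Finset.sum_eq_zero
    intro h hh
    have h0 := (hmem h hh).1
    rw [trop_term_left _ _ _ (le_of_lt h0)]
    ring
  · -- F 1 = 0
    rw [hF]
    apply Finset.sum_eq_zero
    intro h hh
    have h1 := (hmem h hh).2
    rw [trop_term_right _ _ _ (le_of_lt h1)]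
    ring
  · -- nonneg
    intro x hx
    apply Finset.sum_nonneg
    intro h hh
    have h0 := (hmem h hh).1
    have h1 := (hmem h hh).2
    have : (0:ℝ) ≤ min ((1 - h) * x) (h * (1 - x)) := by
      apply le_min
      · nlinarith [hx.1, hx.2]
      · nlinarith [hx.1, hx.2]
    exact mul_nonneg (by positivity) this
  · -- min of affine representation
    refine ⟨t.powerset.image
      (fun S => (((∑ h ∈ t \ S, μ h : ℕ) : ℤ) - z, ∑ h ∈ S, (μ h : ℝ) * h)),
      (Finset.powerset_nonempty t).image _, ?_⟩
    intro x _
    have key : F x = t.powerset.inf' (Finset.powerset_nonempty t)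
        (fun S => (∑ h ∈ S, (μ h : ℝ) * (h * (1 - x)))
          + ∑ h ∈ t \ S, (μ h : ℝ) * ((1 - h) * x)) := by
      rw [← trop_sum_min_eq_inf'_powerset t
        (fun h => (μ h : ℝ) * ((1 - h) * x)) (fun h => (μ h : ℝ) * (h * (1 - x)))]
      rw [hF]
      apply Finset.sum_congr rfl
      intro h _
      exact trop_mul_min _ _ _ (by positivity)
    rw [key, Finset.inf'_image]
    apply Finset.inf'_congr _ rfl
    intro S hS
    have hSt : S ⊆ t := Finset.mem_powerset.1 hS
    have hsplit : (∑ h ∈ t \ S, (μ h : ℝ) * h) + ∑ h ∈ S, (μ h : ℝ) * h = (z : ℝ) := by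
      rw [← hzt]
      exact Finset.sum_sdiff hSt
    simp only [Function.comp]
    push_cast
    have e1 : ∑ h ∈ S, (μ h : ℝ) * (h * (1 - x))
        = (∑ h ∈ S, (μ h : ℝ) * h) - (∑ h ∈ S, (μ h : ℝ) * h) * x := by
      rw [Finset.sum_mul, ← Finset.sum_sub_distrib]
      apply Finset.sum_congr rfl; intros; ring
    have e2 : ∑ h ∈ t \ S, (μ h : ℝ) * ((1 - h) * x)
        = (∑ h ∈ t \ S, (μ h : ℝ)) * x - (∑ h ∈ t \ S, (μ h : ℝ) * h) * x := by
      rw [Finset.sum_mul, Finset.sum_mul, ← Finset.sum_sub_distrib]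
      apply Finset.sum_congr rfl; intros; ring
    rw [e1, e2]
    linear_combination (-x) * hsplit
  · -- breakpoint config
    intro h₀ hh₀
    refine ⟨∑ h ∈ t, (if h₀ ≤ h then (μ h : ℝ) * (1 - h) else -((μ h : ℝ) * h)),
      ∑ h ∈ t, (if h₀ < h then (μ h : ℝ) * (1 - h) else -((μ h : ℝ) * h)), ?_, ?_, ?_⟩
    · -- left derivative
      apply HasDerivWithinAt.fun_sum
      intro h _
      by_cases hc : h₀ ≤ h
      · have base : HasDerivWithinAt (fun y => (μ h : ℝ) * ((1 - h) * y))
            ((μ h : ℝ) * (1 - h)) (Set.Iio h₀) h₀ := by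
          have := trop_hasDerivAt_lin ((μ h : ℝ) * (1 - h)) h₀
          have e : (fun y : ℝ => (μ h : ℝ) * (1 - h) * y) = fun y => (μ h : ℝ) * ((1 - h) * y) := by
            funext y; ring
          rw [e] at this
          exact this.hasDerivWithinAt
        rw [if_pos hc]
        exact base.congr (fun y hy => trop_term_left _ _ _ (le_trans (le_of_lt hy) hc))
          (trop_term_left _ _ _ hc)
      · push_neg at hc
        rw [if_neg (not_le.2 hc)]
        have base : HasDerivAt (fun y => (μ h : ℝ) * (h * (1 - y))) (-((μ h : ℝ) * h)) h₀ := by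
          have := trop_hasDerivAt_lin' ((μ h : ℝ) * h) h₀
          have e : (fun y : ℝ => (μ h : ℝ) * h * (1 - y)) = fun y => (μ h : ℝ) * (h * (1 - y)) := by
            funext y; ring
          rw [e] at this
          exact this
        have : HasDerivAt (fun y => (μ h : ℝ) * min ((1 - h) * y) (h * (1 - y)))
            (-((μ h : ℝ) * h)) h₀ := by
          apply base.congr_of_eventuallyEq
          filter_upwards [Ioi_mem_nhds hc] with y hy
          exact trop_term_right _ _ _ (le_of_lt hy)
        exact this.hasDerivWithinAt
    · -- right derivative
      apply HasDerivWithinAt.fun_sum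
      intro h _
      by_cases hc : h₀ < h
      · beta_reduce
        rw [if_pos hc]
        have base : HasDerivAt (fun y => (μ h : ℝ) * ((1 - h) * y))
            ((μ h : ℝ) * (1 - h)) h₀ := by
          have := trop_hasDerivAt_lin ((μ h : ℝ) * (1 - h)) h₀
          have e : (fun y : ℝ => (μ h : ℝ) * (1 - h) * y) = fun y => (μ h : ℝ) * ((1 - h) * y) := by
            funext y; ring
          rw [e] at this
          exact this
        have : HasDerivAt (fun y => (μ h : ℝ) * min ((1 - h) * y) (h * (1 - y)))
            ((μ h : ℝ) * (1 - h)) h₀ := by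
          apply base.congr_of_eventuallyEq
          filter_upwards [Iio_mem_nhds hc] with y hy
          exact trop_term_left _ _ _ (le_of_lt hy)
        exact this.hasDerivWithinAt
      · push_neg at hc
        rw [if_neg (not_lt.2 hc)]
        have base : HasDerivWithinAt (fun y => (μ h : ℝ) * (h * (1 - y)))
            (-((μ h : ℝ) * h)) (Set.Ioi h₀) h₀ := by
          have := trop_hasDerivAt_lin' ((μ h : ℝ) * h) h₀
          have e : (fun y : ℝ => (μ h : ℝ) * h * (1 - y)) = fun y => (μ h : ℝ) * (h * (1 - y)) := by
            funext y; ring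
          rw [e] at this
          exact this.hasDerivWithinAt
        exact base.congr (fun y hy => trop_term_right _ _ _ (le_trans hc (le_of_lt hy)))
          (trop_term_right _ _ _ hc)
    · -- the jump equals μ h₀
      rw [← Finset.sum_sub_distrib]
      have : ∀ h ∈ t, (if h₀ ≤ h then (μ h : ℝ) * (1 - h) else -((μ h : ℝ) * h))
          - (if h₀ < h then (μ h : ℝ) * (1 - h) else -((μ h : ℝ) * h))
          = if h = h₀ then (μ h : ℝ) else 0 := by
        intro h _
        rcases lt_trichotomy h h₀ with hc | hc | hc
        · rw [if_neg (not_le.2 hc), if_neg (not_lt.2 (le_of_lt hc)), if_neg (ne_of_lt hc)]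
          ring
        · subst hc
          rw [if_pos le_rfl, if_neg (lt_irrefl _), if_pos rfl]
          ring
        · rw [if_pos (le_of_lt hc), if_pos hc, if_neg (ne_of_gt hc)]
          ring
      rw [Finset.sum_congr rfl this, Finset.sum_ite_eq' t h₀ (fun h => (μ h : ℝ))]
      by_cases hmem' : h₀ ∈ t
      · rw [if_pos hmem']
      · rw [if_neg hmem']
        have : μ h₀ = 0 := by
          by_contra hne
          exact hmem' (hfin.mem_toFinset.2 hne)
        rw [this]; simp

end Back

section Fwd

open Filter Topology

theorem trop_forward (μ : ℝ → ℕ) (hfin : (Function.support μ).Finite)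
    (hsub : Function.support μ ⊆ Set.Ioo (0 : ℝ) 1) (F : ℝ → ℝ)
    (hF : IsTropPoly F) (hconf : IsBreakpointConfig F μ) :
    ∃ z : ℤ, (∑ᶠ h, (μ h : ℝ) * h) = (z : ℝ) := by
  classical
  obtain ⟨hF0, hF1, hFnn, s, hs, hrepr⟩ := hF
  set t : Finset ℝ := hfin.toFinset with ht
  have hmem : ∀ h ∈ t, h ∈ Set.Ioo (0:ℝ) 1 := fun h hh => hsub (hfin.mem_toFinset.1 hh)
  have htmu : ∀ x, x ∉ t → μ x = 0 := by
    intro x hx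
    by_contra hne
    exact hx (hfin.mem_toFinset.2 hne)
  set Φ : ℝ → ℝ := fun x => ∑ h ∈ t, (μ h : ℝ) * max (x - h) 0 with hΦdef
  -- continuity facts
  have hΦcont : Continuous Φ := by
    apply continuous_finset_sum
    intro h _
    exact continuous_const.mul ((continuous_id.sub continuous_const).max continuous_const)
  have hFcont : ContinuousOn F (Set.Icc (0:ℝ) 1) := by
    apply (trop_continuous_inf' s hs).continuousOn.congr
    intro x hx
    exact hrepr x hx
  -- one-sided derivatives of Φ
  have hΦl : ∀ x : ℝ, HasDerivWithinAt Φ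
      (∑ h ∈ t, (μ h : ℝ) * (if h < x then 1 else 0)) (Set.Iio x) x := by
    intro x
    apply HasDerivWithinAt.fun_sum
    intro h _
    by_cases hc : h < x
    · rw [if_pos hc]
      have base : HasDerivAt (fun y => (μ h : ℝ) * (y - h)) ((μ h : ℝ)) x := by
        simpa using ((hasDerivAt_id x).sub_const h).const_mul ((μ h : ℝ))
      have : HasDerivAt (fun y => (μ h : ℝ) * max (y - h) 0) ((μ h : ℝ)) x := by
        apply base.congr_of_eventuallyEq
        filter_upwards [Ioi_mem_nhds hc] with y hy
        rw [max_eq_left (by linarith [Set.mem_Ioi.1 hy] : (0:ℝ) ≤ y - h)]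
      simpa using this.hasDerivWithinAt
    · rw [if_neg hc, mul_zero]
      push_neg at hc
      have base : HasDerivWithinAt (fun _ : ℝ => (0:ℝ)) 0 (Set.Iio x) x :=
        (hasDerivAt_const x (0:ℝ)).hasDerivWithinAt
      apply base.congr
      · intro y hy
        rw [max_eq_right (by linarith [Set.mem_Iio.1 hy] : y - h ≤ 0), mul_zero]
      · rw [max_eq_right (by linarith : x - h ≤ 0), mul_zero]
  have hΦr : ∀ x : ℝ, HasDerivWithinAt Φ
      (∑ h ∈ t, (μ h : ℝ) * (if h ≤ x then 1 else 0)) (Set.Ioi x) x := by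
    intro x
    apply HasDerivWithinAt.fun_sum
    intro h _
    by_cases hc : h ≤ x
    · rw [if_pos hc, mul_one]
      have base : HasDerivWithinAt (fun y => (μ h : ℝ) * (y - h)) ((μ h : ℝ)) (Set.Ioi x) x := by
        have : HasDerivAt (fun y => (μ h : ℝ) * (y - h)) ((μ h : ℝ)) x := by
          simpa using ((hasDerivAt_id x).sub_const h).const_mul ((μ h : ℝ))
        exact this.hasDerivWithinAt
      apply base.congr
      · intro y hy
        rw [max_eq_left (by linarith [Set.mem_Ioi.1 hy] : (0:ℝ) ≤ y - h)]
      · rw [max_eq_left (by linarith : (0:ℝ) ≤ x - h)]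
    · rw [if_neg hc, mul_zero]
      push_neg at hc
      have base : HasDerivAt (fun _ : ℝ => (0:ℝ)) 0 x := hasDerivAt_const x 0
      have : HasDerivAt (fun y => (μ h : ℝ) * max (y - h) 0) 0 x := by
        apply base.congr_of_eventuallyEq
        filter_upwards [Iio_mem_nhds hc] with y hy
        rw [max_eq_right (by linarith [Set.mem_Iio.1 hy] : y - h ≤ 0), mul_zero]
      exact this.hasDerivWithinAt
  -- the jump of Φ
  have hΦjump : ∀ x : ℝ,
      (∑ h ∈ t, (μ h : ℝ) * (if h ≤ x then 1 else 0))
        - (∑ h ∈ t, (μ h : ℝ) * (if h < x then 1 else 0)) = (μ x : ℝ) := by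
    intro x
    rw [← Finset.sum_sub_distrib]
    have : ∀ h ∈ t, (μ h : ℝ) * (if h ≤ x then 1 else 0) - (μ h : ℝ) * (if h < x then 1 else 0)
        = if h = x then (μ h : ℝ) else 0 := by
      intro h _
      rcases lt_trichotomy h x with hc | hc | hc
      · rw [if_pos (le_of_lt hc), if_pos hc, if_neg (ne_of_lt hc)]; ring
      · subst hc; rw [if_pos le_rfl, if_neg (lt_irrefl _), if_pos rfl]; ring
      · rw [if_neg (not_le.2 hc), if_neg (not_lt.2 (le_of_lt hc)), if_neg (ne_of_gt hc)]; ring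
    rw [Finset.sum_congr rfl this, Finset.sum_ite_eq' t x (fun h => (μ h : ℝ))]
    by_cases hx : x ∈ t
    · rw [if_pos hx]
    · rw [if_neg hx, htmu x hx]; simp
  set G : ℝ → ℝ := fun x => F x + Φ x with hGdef
  -- key: G is differentiable on (0,1), with integer-related derivative off the support
  have key : ∀ x ∈ Set.Ioo (0:ℝ) 1, ∃ w : ℝ, HasDerivAt G w x ∧
      (μ x = 0 → ∃ n : ℤ, w = (n : ℝ)) := by
    intro x hx
    obtain ⟨dl, dr, hdl, hdr, hμ⟩ := hconf x hx
    set dlΦ : ℝ := ∑ h ∈ t, (μ h : ℝ) * (if h < x then 1 else 0) with hdlΦ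
    set drΦ : ℝ := ∑ h ∈ t, (μ h : ℝ) * (if h ≤ x then 1 else 0) with hdrΦ
    have hl : HasDerivWithinAt G (dl + dlΦ) (Set.Iio x) x := hdl.add (hΦl x)
    have hr : HasDerivWithinAt G (dr + drΦ) (Set.Ioi x) x := hdr.add (hΦr x)
    have heq : dr + drΦ = dl + dlΦ := by
      have := hΦjump x
      rw [← hdlΦ, ← hdrΦ] at this
      linarith [hμ, this]
    rw [heq] at hr
    have hG : HasDerivAt G (dl + dlΦ) x := by
      have hu := hl.union hr
      rw [Set.Iio_union_Ioi] at hu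
      have hu' : HasDerivWithinAt G (dl + dlΦ) (Set.univ \ {x}) x := by
        rwa [Set.compl_eq_univ_diff] at hu
      rw [hasDerivWithinAt_diff_singleton, hasDerivWithinAt_univ] at hu'
      exact hu'
    refine ⟨dl + dlΦ, hG, ?_⟩
    intro hμ0
    -- Φ is differentiable at x since x is not in the support
    have hΦd : HasDerivAt Φ dlΦ x := by
      rw [hdlΦ]
      apply HasDerivAt.fun_sum
      intro h hh
      have hne : h ≠ x := by
        intro hcon
        subst hcon
        exact absurd hμ0 (Function.mem_support.1 (hfin.mem_toFinset.1 hh))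
      by_cases hc : h < x
      · rw [if_pos hc]
        have base : HasDerivAt (fun y => (μ h : ℝ) * (y - h)) ((μ h : ℝ)) x := by
          simpa using ((hasDerivAt_id x).sub_const h).const_mul ((μ h : ℝ))
        have : HasDerivAt (fun y => (μ h : ℝ) * max (y - h) 0) ((μ h : ℝ)) x := by
          apply base.congr_of_eventuallyEq
          filter_upwards [Ioi_mem_nhds hc] with y hy
          rw [max_eq_left (by linarith [Set.mem_Ioi.1 hy] : (0:ℝ) ≤ y - h)]
        simpa using this
      · rw [if_neg hc, mul_zero]
        have hgt : x < h := lt_of_le_of_ne (not_lt.1 hc) (Ne.symm hne)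
        have base : HasDerivAt (fun _ : ℝ => (0:ℝ)) 0 x := hasDerivAt_const x 0
        apply base.congr_of_eventuallyEq
        filter_upwards [Iio_mem_nhds hgt] with y hy
        rw [max_eq_right (by linarith [Set.mem_Iio.1 hy] : y - h ≤ 0), mul_zero]
    have hFd : HasDerivAt F dl x := by
      have hsub' : HasDerivAt (fun y => G y - Φ y) (dl + dlΦ - dlΦ) x := hG.sub hΦd
      have hfun : (fun y => G y - Φ y) = F := by
        funext y; rw [hGdef]; ring
      rw [hfun] at hsub'
      simpa using hsub'
    -- active line at x
    obtain ⟨p, hp, hpx⟩ := Finset.exists_mem_eq_inf' hs (fun va => va.2 + (va.1 : ℝ) * x)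
    have hxIcc : x ∈ Set.Icc (0:ℝ) 1 := ⟨le_of_lt hx.1, le_of_lt hx.2⟩
    have hFx : F x = p.2 + (p.1 : ℝ) * x := by rw [hrepr x hxIcc, hpx]
    have hmin : IsLocalMin (fun y => p.2 + (p.1 : ℝ) * y - F y) x := by
      have hnhds : Set.Ioo (0:ℝ) 1 ∈ 𝓝 x := isOpen_Ioo.mem_nhds hx
      filter_upwards [hnhds] with y hy
      have hyIcc : y ∈ Set.Icc (0:ℝ) 1 := ⟨le_of_lt hy.1, le_of_lt hy.2⟩
      have : F y ≤ p.2 + (p.1 : ℝ) * y := by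
        rw [hrepr y hyIcc]
        exact Finset.inf'_le _ hp
      simp only [hFx]
      linarith
    have hLd : HasDerivAt (fun y => p.2 + (p.1 : ℝ) * y - F y) ((p.1 : ℝ) - dl) x := by
      have : HasDerivAt (fun y => p.2 + (p.1 : ℝ) * y) ((p.1 : ℝ)) x := by
        simpa using ((hasDerivAt_id x).const_mul ((p.1:ℝ))).const_add p.2
      exact this.sub hFd
    have hzero : (p.1 : ℝ) - dl = 0 := hmin.hasDerivAt_eq_zero hLd
    refine ⟨p.1 + (∑ h ∈ t.filter (· < x), μ h : ℕ), ?_⟩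
    have hcast : ((∑ h ∈ t.filter (· < x), μ h : ℕ) : ℝ) = dlΦ := by
      rw [hdlΦ, Nat.cast_sum, Finset.sum_filter]
      apply Finset.sum_congr rfl
      intro h _
      by_cases hc : h < x
      · rw [if_pos hc, if_pos hc, mul_one]
      · rw [if_neg hc, if_neg hc, mul_zero]
    have hdleq : dl = (p.1 : ℝ) := by linarith [hzero]
    rw [hdleq, ← hcast]
    push_cast
    ring
  -- the derivative function
  set g : ℝ → ℝ := fun x => if hx : x ∈ Set.Ioo (0:ℝ) 1 then (key x hx).choose else 0 with hgdef
  have hg : ∀ x (hx : x ∈ Set.Ioo (0:ℝ) 1), HasDerivAt G (g x) x := by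
    intro x hx
    rw [hgdef]
    simp only [dif_pos hx]
    exact (key x hx).choose_spec.1
  have hgz : ∀ x (hx : x ∈ Set.Ioo (0:ℝ) 1), μ x = 0 → ∃ n : ℤ, g x = (n : ℝ) := by
    intro x hx h0
    rw [hgdef]
    simp only [dif_pos hx]
    exact (key x hx).choose_spec.2 h0
  -- g is constant on (0,1), via Darboux + integrality
  have hconst : ∀ a ∈ Set.Ioo (0:ℝ) 1, ∀ b ∈ Set.Ioo (0:ℝ) 1, a < b → g a = g b := by
    intro a ha b hb hab
    by_contra hne
    have hIccsub : Set.Icc a b ⊆ Set.Ioo (0:ℝ) 1 := fun y hy =>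
      ⟨lt_of_lt_of_le ha.1 hy.1, lt_of_le_of_lt hy.2 hb.2⟩
    have hf : ∀ x ∈ Set.Icc a b, HasDerivWithinAt G (g x) (Set.Icc a b) x := fun x hx =>
      (hg x (hIccsub hx)).hasDerivWithinAt
    set u : ℝ := min (g a) (g b) with hu
    set v : ℝ := max (g a) (g b) with hv
    have huv : u < v := by
      rcases lt_or_gt_of_ne hne with h | h
      · rw [hu, hv, min_eq_left (le_of_lt h), max_eq_right (le_of_lt h)]; exact h
      · rw [hu, hv, min_eq_right (le_of_lt h), max_eq_left (le_of_lt h)]; exact h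
    set B : Set ℝ := (g '' (Function.support μ)) ∪
      ((fun n : ℤ => (n : ℝ)) '' (Set.Icc ⌈u⌉ ⌊v⌋)) with hB
    have hBfin : B.Finite := (hfin.image g).union ((Set.finite_Icc _ _).image _)
    obtain ⟨m, hm⟩ : ((Set.Ioo u v) \ B).Nonempty :=
      ((Set.Ioo_infinite huv).diff hBfin).nonempty
    have hmem' : m ∈ g '' Set.Ioo a b := by
      rcases lt_or_gt_of_ne hne with hlt | hgt
      · have hma : g a < m := by
          have : u = g a := by rw [hu, min_eq_left (le_of_lt hlt)]
          rw [← this]; exact hm.1.1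
        have hmb : m < g b := by
          have : v = g b := by rw [hv, max_eq_right (le_of_lt hlt)]
          rw [← this]; exact hm.1.2
        exact exists_hasDerivWithinAt_eq_of_gt_of_lt (le_of_lt hab) hf hma hmb
      · have hmb : g b < m := by
          have : u = g b := by rw [hu, min_eq_right (le_of_lt hgt)]
          rw [← this]; exact hm.1.1
        have hma : m < g a := by
          have : v = g a := by rw [hv, max_eq_left (le_of_lt hgt)]
          rw [← this]; exact hm.1.2
        exact exists_hasDerivWithinAt_eq_of_lt_of_gt (le_of_lt hab) hf hma hmb
    obtain ⟨c, hc, hcm⟩ := hmem'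
    by_cases hcs : μ c = 0
    · obtain ⟨n, hn⟩ := hgz c (hIccsub ⟨le_of_lt hc.1, le_of_lt hc.2⟩) hcs
      apply hm.2
      rw [hB]
      right
      refine ⟨n, ?_, by rw [← hcm, hn]⟩
      constructor
      · rw [Int.ceil_le]
        have : (n : ℝ) = m := by rw [← hcm, hn]
        rw [this]; exact le_of_lt hm.1.1
      · rw [Int.le_floor]
        have : (n : ℝ) = m := by rw [← hcm, hn]
        rw [this]; exact le_of_lt hm.1.2
    · apply hm.2
      rw [hB]
      left
      exact ⟨c, Function.mem_support.2 hcs, hcm⟩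
  -- pick a point not in the support
  obtain ⟨x₀, hx₀⟩ : ((Set.Ioo (0:ℝ) 1) \ Function.support μ).Nonempty :=
    ((Set.Ioo_infinite zero_lt_one).diff hfin).nonempty
  have hx₀Ioo : x₀ ∈ Set.Ioo (0:ℝ) 1 := hx₀.1
  have hx₀μ : μ x₀ = 0 := by
    by_contra hne
    exact hx₀.2 (Function.mem_support.2 hne)
  set w : ℝ := g x₀ with hw
  have hgw : ∀ y ∈ Set.Ioo (0:ℝ) 1, g y = w := by
    intro y hy
    rcases lt_trichotomy y x₀ with h | h | h
    · exact (hconst y hy x₀ hx₀Ioo h)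
    · rw [h]
    · exact (hconst x₀ hx₀Ioo y hy h).symm
  -- H is constant
  set H : ℝ → ℝ := fun y => G y - w * y with hHdef
  have hHd : ∀ y ∈ Set.Ioo (0:ℝ) 1, HasDerivAt H 0 y := by
    intro y hy
    have hwl : HasDerivAt (fun z : ℝ => w * z) w y := by
      simpa using (hasDerivAt_id y).const_mul w
    have : HasDerivAt H (g y - w) y := (hg y hy).sub hwl
    rwa [hgw y hy, sub_self] at this
  have hHc : ∀ a ∈ Set.Ioo (0:ℝ) 1, ∀ b ∈ Set.Ioo (0:ℝ) 1, a < b → H a = H b := by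
    intro a ha b hb hab
    have hIccsub : Set.Icc a b ⊆ Set.Ioo (0:ℝ) 1 := fun y hy =>
      ⟨lt_of_lt_of_le ha.1 hy.1, lt_of_le_of_lt hy.2 hb.2⟩
    have hcont : ContinuousOn H (Set.Icc a b) := fun y hy =>
      ((hHd y (hIccsub hy)).continuousAt).continuousWithinAt
    obtain ⟨c, _, hc⟩ := exists_hasDerivAt_eq_slope H (fun _ => 0) hab hcont
      (fun y hy => hHd y (hIccsub ⟨le_of_lt hy.1, le_of_lt hy.2⟩))
    have hc' := hc.symm
    rw [div_eq_zero_iff] at hc'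
    rcases hc' with h | h
    · linarith
    · exfalso; linarith
  have hHconst : ∀ y ∈ Set.Ioo (0:ℝ) 1, H y = H x₀ := by
    intro y hy
    rcases lt_trichotomy y x₀ with h | h | h
    · exact hHc y hy x₀ hx₀Ioo h
    · rw [h]
    · exact (hHc x₀ hx₀Ioo y hy h).symm
  have hHcont : ContinuousOn H (Set.Icc (0:ℝ) 1) := by
    apply ContinuousOn.sub
    · exact hFcont.add hΦcont.continuousOn
    · exact (continuous_const.mul continuous_id).continuousOn
  have hclosIoo : ∀ y : ℝ, y ∈ Set.Icc (0:ℝ) 1 → Filter.NeBot (𝓝[Set.Ioo (0:ℝ) 1] y) := by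
    intro y hy
    rw [← mem_closure_iff_nhdsWithin_neBot, closure_Ioo (by norm_num : (0:ℝ) ≠ 1)]
    exact hy
  have hend : ∀ y ∈ Set.Icc (0:ℝ) 1, H y = H x₀ := by
    intro y hy
    have h1 : Filter.Tendsto H (𝓝[Set.Ioo (0:ℝ) 1] y) (𝓝 (H y)) :=
      ((hHcont y hy).mono_left (nhdsWithin_mono y Set.Ioo_subset_Icc_self))
    have h2 : Filter.Tendsto H (𝓝[Set.Ioo (0:ℝ) 1] y) (𝓝 (H x₀)) := by
      apply Filter.Tendsto.congr' _ tendsto_const_nhds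
      filter_upwards [self_mem_nhdsWithin] with z hz
      exact (hHconst z hz).symm
    have := hclosIoo y hy
    exact tendsto_nhds_unique h1 h2
  have hH0 : H 0 = H 1 := by
    rw [hend 0 ⟨le_rfl, zero_le_one⟩, hend 1 ⟨zero_le_one, le_rfl⟩]
  -- compute: H 0 = G 0 = F 0 + Φ 0 = 0, H 1 = G 1 - w
  have hΦ0 : Φ 0 = 0 := by
    rw [hΦdef]
    apply Finset.sum_eq_zero
    intro h hh
    rw [max_eq_right (by linarith [(hmem h hh).1] : (0:ℝ) - h ≤ 0), mul_zero]
  have hΦ1 : Φ 1 = (∑ h ∈ t, (μ h : ℝ)) - ∑ h ∈ t, (μ h : ℝ) * h := by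
    rw [hΦdef, ← Finset.sum_sub_distrib]
    apply Finset.sum_congr rfl
    intro h hh
    rw [max_eq_left (by linarith [(hmem h hh).2] : (0:ℝ) ≤ 1 - h)]
    ring
  have hkey : (∑ h ∈ t, (μ h : ℝ) * h) = (∑ h ∈ t, (μ h : ℝ)) - w := by
    have e0 : H 0 = 0 := by
      show F 0 + Φ 0 - w * 0 = 0
      rw [hF0, hΦ0]
      ring
    have e1 : H 1 = (∑ h ∈ t, (μ h : ℝ)) - ∑ h ∈ t, (μ h : ℝ) * h - w := by
      show F 1 + Φ 1 - w * 1 = _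
      rw [hF1, hΦ1]
      ring
    rw [e0] at hH0
    rw [e1] at hH0
    linarith
  obtain ⟨n, hn⟩ := hgz x₀ hx₀Ioo hx₀μ
  refine ⟨(∑ h ∈ t, μ h : ℕ) - n, ?_⟩
  have hfs : (∑ᶠ h, (μ h : ℝ) * h) = ∑ h ∈ t, (μ h : ℝ) * h := by
    apply finsum_eq_sum_of_support_subset
    intro h hh
    simp only [Function.mem_support] at hh
    rw [ht, Set.Finite.coe_toFinset]
    intro h0
    exact hh (by rw [h0]; simp)
  rw [hfs, hkey]
  have hwn : w = (n : ℝ) := hn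
  rw [hwn]
  push_cast
  ring

end Fwd

/-- A finitely supported `μ : ℝ → ℕ` with support in `(0,1)` is the
breakpoint configuration of some `[0,1]`-tropical polynomial iff `Σ_h μ(h)·h ∈ ℤ`. -/
theorem breakpoint_config_iff_integer_weighted_sum (μ : ℝ → ℕ)
    (hfin : (Function.support μ).Finite)
    (hsub : Function.support μ ⊆ Set.Ioo (0 : ℝ) 1) :
    (∃ F : ℝ → ℝ, IsTropPoly F ∧ IsBreakpointConfig F μ) ↔
      ∃ z : ℤ, (∑ᶠ h, (μ h : ℝ) * h) = (z : ℝ) := by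
  constructor
  · rintro ⟨F, hF, hconf⟩
    exact trop_forward μ hfin hsub F hF hconf
  · rintro ⟨z, hz⟩
    exact trop_backward μ hfin hsub z hz
end

section
/- If a configuration μ satisfies μ(h) ≤ 2 for all h ∈ ℝ, then for every p ∈ (0,1) the configuration G_p μ also satisfies (G_p μ)(h) ≤ 2 for all h. Consequently, in any relaxation sequence starting from the zero configuration (μ_0 = 0, μ_{m+1} = G_{p_{k(m)}} μ_m for points p_{k(m)} ∈ (0,1)), every configuration μ_m takes only values in {0, 1, 2}: the toppling operator never produces points with multiplicity greater than 2. -/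
open Classical MeasureTheory Function Set

/-- A configuration: a finitely supported `ℝ → ℕ` with support in `(0,1)`. -/
def IsConfig (μ : ℝ → ℕ) : Prop :=
  (Function.support μ).Finite ∧ Function.support μ ⊆ Set.Ioo (0 : ℝ) 1

/-- Total mass `Σ_h μ(h)` of a configuration. -/
noncomputable def totalMass (μ : ℝ → ℕ) : ℕ := ∑ᶠ h, μ h

/-- Weighted sum `Σ_h μ(h)·h` of a configuration. -/
noncomputable def weightedSum (μ : ℝ → ℕ) : ℝ := ∑ᶠ h, (μ h : ℝ) * h

/-- A configuration is admissible if `Σ_h μ(h)·h` is an integer. -/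
def Admissible (μ : ℝ → ℕ) : Prop := IsConfig μ ∧ ∃ z : ℤ, weightedSum μ = (z : ℝ)

/-- The toppling operator `G_p`. -/
noncomputable def topple (p : ℝ) (μ : ℝ → ℕ) : ℝ → ℕ :=
  if 1 ≤ μ p then μ
  else
    let a := sSup ({0} ∪ {h | 1 ≤ μ h ∧ h < p})
    let b := sInf ({1} ∪ {h | 1 ≤ μ h ∧ p < h})
    let c := min (p - a) (b - p)
    fun x =>
      μ x + (if x = a + c then 1 else 0) + (if x = b - c then 1 else 0)
        - (if x = a ∧ 0 < a then 1 else 0) - (if x = b ∧ b < 1 then 1 else 0)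

/-- `μ` is the (necessarily unique) admissible configuration of minimal total mass
whose support contains `P`. -/
def IsMinimalConfig (P : Set ℝ) (μ : ℝ → ℕ) : Prop :=
  Admissible μ ∧ (∀ p ∈ P, 1 ≤ μ p) ∧
    ∀ ν : ℝ → ℕ, Admissible ν → (∀ p ∈ P, 1 ≤ ν p) → totalMass μ ≤ totalMass ν


lemma topple_key (μ : ℝ → ℕ) (hμ : IsConfig μ) {p : ℝ} (hp : p ∈ Set.Ioo (0 : ℝ) 1) :
    IsConfig (topple p μ) ∧ ((∀ h, μ h ≤ 2) → ∀ h, topple p μ h ≤ 2) := by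
  by_cases hpμ : 1 ≤ μ p
  · have : topple p μ = μ := by rw [topple, if_pos hpμ]
    rw [this]
    exact ⟨hμ, fun hb => hb⟩
  · have hμp0 : μ p = 0 := by omega
    set S := ({0} ∪ {h | 1 ≤ μ h ∧ h < p} : Set ℝ) with hSdef
    set T := ({1} ∪ {h | 1 ≤ μ h ∧ p < h} : Set ℝ) with hTdef
    set a := sSup S with hadef
    set b := sInf T with hbdef
    set c := min (p - a) (b - p) with hcdef
    have hSfin : S.Finite := by
      apply (hμ.1.union (Set.finite_singleton 0)).subset
      rintro x (hx | hx)
      · exact Or.inr hx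
      · exact Or.inl (Function.mem_support.mpr (Nat.one_le_iff_ne_zero.mp hx.1))
    have hTfin : T.Finite := by
      apply (hμ.1.union (Set.finite_singleton 1)).subset
      rintro x (hx | hx)
      · exact Or.inr hx
      · exact Or.inl (Function.mem_support.mpr (Nat.one_le_iff_ne_zero.mp hx.1))
    have hSne : S.Nonempty := ⟨0, Or.inl rfl⟩
    have hTne : T.Nonempty := ⟨1, Or.inl rfl⟩
    have ha_mem : a ∈ S := hSne.csSup_mem hSfin
    have hb_mem : b ∈ T := hTne.csInf_mem hTfin
    have ha_nonneg : (0 : ℝ) ≤ a := le_csSup hSfin.bddAbove (Or.inl rfl)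
    have hb_le_one : b ≤ 1 := csInf_le hTfin.bddBelow (Or.inl rfl)
    have ha_lt : a < p := by
      rcases ha_mem with h | h
      · simp only [Set.mem_singleton_iff] at h
        rw [h]; exact hp.1
      · exact h.2
    have hb_gt : p < b := by
      rcases hb_mem with h | h
      · simp only [Set.mem_singleton_iff] at h
        rw [h]; exact hp.2
      · exact h.2
    have hc_pos : 0 < c := lt_min (by linarith) (by linarith)
    have hac_le : a + c ≤ p := by
      have h1 : c ≤ p - a := min_le_left _ _
      linarith
    have hbc_ge : p ≤ b - c := by
      have h1 : c ≤ b - p := min_le_right _ _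
      linarith
    have hμac : μ (a + c) = 0 := by
      by_contra hne
      have h1 : 1 ≤ μ (a + c) := Nat.one_le_iff_ne_zero.mpr hne
      rcases eq_or_lt_of_le hac_le with heq | hlt
      · rw [heq] at h1; omega
      · have : a + c ∈ S := Or.inr ⟨h1, hlt⟩
        have := le_csSup hSfin.bddAbove this
        linarith
    have hμbc : μ (b - c) = 0 := by
      by_contra hne
      have h1 : 1 ≤ μ (b - c) := Nat.one_le_iff_ne_zero.mpr hne
      rcases eq_or_lt_of_le hbc_ge with heq | hlt
      · rw [← heq] at h1; omega
      · have : b - c ∈ T := Or.inr ⟨h1, hlt⟩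
        have := csInf_le hTfin.bddBelow this
        linarith
    have htop : topple p μ = fun x =>
        μ x + (if x = a + c then 1 else 0) + (if x = b - c then 1 else 0)
          - (if x = a ∧ 0 < a then 1 else 0) - (if x = b ∧ b < 1 then 1 else 0) := by
      rw [topple, if_neg hpμ]
    have hstep : ∀ x, topple p μ x ≤
        μ x + (if x = a + c then 1 else 0) + (if x = b - c then 1 else 0) := by
      intro x
      rw [htop]
      exact le_trans (Nat.sub_le _ _) (Nat.sub_le _ _)
    have hbnd2 : (∀ h, μ h ≤ 2) → ∀ h, topple p μ h ≤ 2 := by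
      intro hb h
      have hs := hstep h
      rcases eq_or_ne h (a + c) with h1 | h1
      · have h0 : μ h = 0 := h1 ▸ hμac
        have : (if h = b - c then 1 else 0) ≤ 1 := by split <;> omega
        rw [if_pos h1] at hs
        omega
      · rcases eq_or_ne h (b - c) with h2 | h2
        · have h0 : μ h = 0 := h2 ▸ hμbc
          rw [if_neg h1, if_pos h2] at hs
          omega
        · rw [if_neg h1, if_neg h2] at hs
          have := hb h
          omega
    have hsupp : Function.support (topple p μ) ⊆
        Function.support μ ∪ {a + c, b - c} := by
      intro x hx
      by_contra hmem
      simp only [Set.mem_union, Set.mem_insert_iff, Set.mem_singleton_iff,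
        Function.mem_support] at hmem hx
      push_neg at hmem
      obtain ⟨hx0, hx1, hx2⟩ := hmem
      have hμx : μ x = 0 := by simpa using hx0
      apply hx
      rw [htop]
      simp [hμx, if_neg hx1, if_neg hx2]
    refine ⟨⟨(hμ.1.union ((Set.finite_singleton _).insert _)).subset hsupp, ?_⟩, hbnd2⟩
    intro x hx
    rcases hsupp hx with hx' | hx'
    · exact hμ.2 hx'
    · rcases hx' with rfl | rfl
      · exact ⟨by linarith, by linarith [hp.2]⟩
      · constructor <;> [linarith [hp.1]; linarith]

/-- Toppling never produces multiplicities greater than `2`: if a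
configuration is bounded by `2`, so is its image under any `G_p` with `p ∈ (0,1)`;
consequently every term of a relaxation sequence started at the zero configuration
takes values in `{0, 1, 2}`. -/
theorem topple_le_two :
    (∀ (μ : ℝ → ℕ), IsConfig μ → (∀ h, μ h ≤ 2) →
      ∀ p ∈ Set.Ioo (0 : ℝ) 1, ∀ h, topple p μ h ≤ 2) ∧
    (∀ (k : ℕ → ℝ), (∀ m, k m ∈ Set.Ioo (0 : ℝ) 1) →
      ∀ (μ : ℕ → ℝ → ℕ), μ 0 = (fun _ => 0) →
        (∀ m, μ (m + 1) = topple (k m) (μ m)) →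
        ∀ m h, μ m h ≤ 2) := by
  constructor
  · intro μ hμ hb p hp h
    exact (topple_key μ hμ hp).2 hb h
  · intro k hk μ h0 hstep
    have key : ∀ m, IsConfig (μ m) ∧ ∀ h, μ m h ≤ 2 := by
      intro m
      induction m with
      | zero =>
          rw [h0]
          refine ⟨⟨?_, ?_⟩, fun _ => by norm_num⟩
          · simp [Function.support]
          · simp [Function.support]
      | succ n ih =>
          rw [hstep n]
          exact ⟨(topple_key _ ih.1 (hk n)).1, (topple_key _ ih.1 (hk n)).2 ih.2⟩
    exact fun m h => (key m).2 h
end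

section
/- The set {(p, q) ∈ (0,1)² : p ≠ q and L(p, q) = 1} has two-dimensional Lebesgue measure 1/4. -/
open Classical MeasureTheory Function Set

/-- One full round of topplings `G_{p_n} ∘ ⋯ ∘ G_{p_1}` for `ps = [p_1, …, p_n]`. -/
noncomputable def relaxRound (ps : List ℝ) (μ : ℝ → ℕ) : ℝ → ℕ :=
  ps.foldl (fun ν x => topple x ν) μ

/-- The length of relaxation `L(p_1, …, p_n)`: the least `N ≥ 1` such that
`(G_{p_n} ∘ ⋯ ∘ G_{p_1})^N` applied to the zero configuration is the unique
admissible configuration of minimal total mass whose support contains all the `pᵢ`. -/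
noncomputable def relaxLength (ps : List ℝ) : ℕ :=
  sInf {N | 1 ≤ N ∧ IsMinimalConfig {x | x ∈ ps} ((relaxRound ps)^[N] fun _ => 0)}

/-- The locus of pairs `(p, q)` of distinct points of `(0,1)` with relaxation
length `N`. -/
def lengthLocus (N : ℕ) : Set (ℝ × ℝ) :=
  {x : ℝ × ℝ | x.1 ∈ Set.Ioo (0 : ℝ) 1 ∧ x.2 ∈ Set.Ioo (0 : ℝ) 1 ∧ x.1 ≠ x.2 ∧
    relaxLength [x.1, x.2] = N}

noncomputable def cfg2 (a b : ℝ) : ℝ → ℕ :=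
  fun x => (if x = a then 1 else 0) + (if x = b then 1 else 0)

noncomputable def cfg3 (a b c : ℝ) : ℝ → ℕ :=
  fun x => (if x = a then 1 else 0) + (if x = b then 1 else 0) + (if x = c then 1 else 0)

lemma mem_supp_cfg2 {a b h : ℝ} : 1 ≤ cfg2 a b h ↔ h = a ∨ h = b := by
  unfold cfg2; split_ifs <;> simp_all

lemma topple_zero (p : ℝ) (hp0 : 0 < p) (hp1 : p < 1) :
    topple p (fun _ => 0) = cfg2 p (1 - p) := by
  have h : ¬ 1 ≤ (fun _ : ℝ => 0) p := by simp
  simp only [topple]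
  rw [if_neg h]
  have hS : {h : ℝ | 1 ≤ (fun _ : ℝ => (0:ℕ)) h ∧ h < p} = ∅ := by
    ext x; simp
  have hT : {h : ℝ | 1 ≤ (fun _ : ℝ => (0:ℕ)) h ∧ p < h} = ∅ := by
    ext x; simp
  simp only [hS, hT, union_empty, csSup_singleton, csInf_singleton]
  funext x
  simp only [sub_zero, zero_add, lt_self_iff_false, and_false, if_false, Nat.sub_zero]
  rcases le_total p (1 - p) with hle | hle
  · rw [min_eq_left hle]
    rfl
  · rw [min_eq_right hle, show (1:ℝ) - (1 - p) = p from by ring]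
    unfold cfg2
    exact Nat.add_comm _ _

lemma bddBelow_pair (a b : ℝ) : BddBelow ({a, b} : Set ℝ) :=
  ((Set.finite_singleton b).insert a).bddBelow

lemma toppleA (p q : ℝ) (hp : 1/2 < p) (hp1 : p < 1) (hq0 : 0 < q) (hq : q < 1 - p)
    (hgen : 1 - p - q ≠ q) : topple q (cfg2 p (1 - p)) = cfg3 p q (1 - p - q) := by
  have hppos : (0:ℝ) < 1 - p := by linarith
  have h : ¬ 1 ≤ cfg2 p (1 - p) q := by
    rw [mem_supp_cfg2]; rintro (rfl | rfl) <;> linarith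
  have hS : {h : ℝ | 1 ≤ cfg2 p (1 - p) h ∧ h < q} = ∅ := by
    ext x
    simp only [mem_setOf_eq, mem_empty_iff_false, iff_false, not_and]
    rw [mem_supp_cfg2]; rintro (rfl | rfl) <;> intro hx <;> linarith
  have hT : {h : ℝ | 1 ≤ cfg2 p (1 - p) h ∧ q < h} = {p, 1 - p} := by
    ext x
    simp only [mem_setOf_eq, mem_insert_iff, mem_singleton_iff]
    constructor
    · rintro ⟨h1, _⟩; exact mem_supp_cfg2.mp h1
    · rintro (rfl | rfl) <;> exact ⟨mem_supp_cfg2.mpr (by tauto), by linarith⟩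
  have ha : sSup ({0} ∪ {h : ℝ | 1 ≤ cfg2 p (1 - p) h ∧ h < q}) = 0 := by
    rw [hS, union_empty, csSup_singleton]
  have hb : sInf ({1} ∪ {h : ℝ | 1 ≤ cfg2 p (1 - p) h ∧ q < h}) = 1 - p := by
    rw [hT, singleton_union, csInf_insert (bddBelow_pair _ _) ⟨p, by simp⟩, csInf_pair]
    have h1 : p ⊓ (1 - p) = 1 - p := inf_eq_right.mpr (by linarith)
    rw [h1]
    exact inf_eq_right.mpr (by linarith)
  simp only [topple]
  rw [if_neg h]
  simp only [ha, hb]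
  funext x
  have hlt : (1:ℝ) - p < 1 := by linarith
  simp only [sub_zero, zero_add, lt_self_iff_false, and_false, if_false, Nat.sub_zero,
    eq_true hlt, and_true]
  rcases lt_or_gt_of_ne hgen with hc | hc
  · -- 1 - p - q < q, c = 1 - p - q
    rw [min_eq_right (by linarith : (1:ℝ) - p - q ≤ q),
      show (1:ℝ) - p - (1 - p - q) = q from by ring]
    unfold cfg2 cfg3
    have h1 : (0:ℝ) < 1 - p - q := by linarith
    have h2 : (1:ℝ) - p - q < q := hc
    have h3 : q < 1 - p := hq
    have h4 : (1:ℝ) - p < p := by linarith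
    split_ifs <;> first | omega | (exfalso; linarith)
  · -- q < 1 - p - q, c = q
    rw [min_eq_left (by linarith : q ≤ (1:ℝ) - p - q)]
    unfold cfg2 cfg3
    have h1 : (0:ℝ) < q := hq0
    have h2 : q < 1 - p - q := hc
    have h3 : (1:ℝ) - p - q < 1 - p := by linarith
    have h4 : (1:ℝ) - p < p := by linarith
    split_ifs <;> first | omega | (exfalso; linarith)

lemma toppleB (p q : ℝ) (hp0 : 0 < p) (hp : p < 1/2) (hq : 1 - p < q) (hq1 : q < 1)
    (hgen : 2 - p - q ≠ q) : topple q (cfg2 p (1 - p)) = cfg3 p q (2 - p - q) := by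
  have hp1 : p < 1 := by linarith
  have h : ¬ 1 ≤ cfg2 p (1 - p) q := by
    rw [mem_supp_cfg2]; rintro (rfl | rfl) <;> linarith
  have hS : {h : ℝ | 1 ≤ cfg2 p (1 - p) h ∧ h < q} = {p, 1 - p} := by
    ext x
    simp only [mem_setOf_eq, mem_insert_iff, mem_singleton_iff]
    constructor
    · rintro ⟨h1, _⟩; exact mem_supp_cfg2.mp h1
    · rintro (rfl | rfl) <;> exact ⟨mem_supp_cfg2.mpr (by tauto), by linarith⟩
  have hT : {h : ℝ | 1 ≤ cfg2 p (1 - p) h ∧ q < h} = ∅ := by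
    ext x
    simp only [mem_setOf_eq, mem_empty_iff_false, iff_false, not_and]
    rw [mem_supp_cfg2]; rintro (rfl | rfl) <;> intro hx <;> linarith
  have ha : sSup ({0} ∪ {h : ℝ | 1 ≤ cfg2 p (1 - p) h ∧ h < q}) = 1 - p := by
    rw [hS, singleton_union,
      csSup_insert ((Set.finite_singleton _).insert p).bddAbove ⟨p, by simp⟩, csSup_pair]
    have h1 : p ⊔ (1 - p) = 1 - p := sup_eq_right.mpr (by linarith)
    rw [h1]
    exact sup_eq_right.mpr (by linarith)
  have hb : sInf ({1} ∪ {h : ℝ | 1 ≤ cfg2 p (1 - p) h ∧ q < h}) = 1 := by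
    rw [hT, union_empty, csInf_singleton]
  simp only [topple]
  rw [if_neg h]
  simp only [ha, hb]
  funext x
  have hppos : (0:ℝ) < 1 - p := by linarith
  simp only [lt_self_iff_false, and_false, if_false, Nat.sub_zero, eq_true hppos, and_true]
  rcases lt_or_gt_of_ne hgen with hc | hc
  · -- 2 - p - q < q, c = 1 - q
    rw [min_eq_right (by linarith : (1:ℝ) - q ≤ q - (1 - p)),
      show (1:ℝ) - p + (1 - q) = 2 - p - q from by ring,
      show (1:ℝ) - (1 - q) = q from by ring]
    unfold cfg2 cfg3
    split_ifs <;> omega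
  · -- q < 2 - p - q, c = q - (1 - p)
    rw [min_eq_left (by linarith : q - (1 - p) ≤ (1:ℝ) - q),
      show (1:ℝ) - p + (q - (1 - p)) = q from by ring,
      show (1:ℝ) - (q - (1 - p)) = 2 - p - q from by ring]
    unfold cfg2 cfg3
    split_ifs <;> omega

lemma cfg2_self {a b : ℝ} (h : a ≠ b) : cfg2 a b a = 1 := by
  unfold cfg2; rw [if_pos rfl, if_neg h]

lemma compl_i (p q : ℝ) (hq0 : 0 < q) (hqp : q < p) (hpv : p < 1 - p) :
    topple q (cfg2 p (1 - p)) p = 0 := by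
  have hp0 : (0:ℝ) < p := by linarith
  have hp1 : p < 1 := by linarith
  have hne : p ≠ 1 - p := by linarith
  have h : ¬ 1 ≤ cfg2 p (1 - p) q := by
    rw [mem_supp_cfg2]; rintro (rfl | rfl) <;> linarith
  have hS : {h : ℝ | 1 ≤ cfg2 p (1 - p) h ∧ h < q} = ∅ := by
    ext x
    simp only [mem_setOf_eq, mem_empty_iff_false, iff_false, not_and]
    rw [mem_supp_cfg2]; rintro (rfl | rfl) <;> intro hx <;> linarith
  have hT : {h : ℝ | 1 ≤ cfg2 p (1 - p) h ∧ q < h} = {p, 1 - p} := by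
    ext x
    simp only [mem_setOf_eq, mem_insert_iff, mem_singleton_iff]
    constructor
    · rintro ⟨h1, _⟩; exact mem_supp_cfg2.mp h1
    · rintro (rfl | rfl) <;> exact ⟨mem_supp_cfg2.mpr (by tauto), by linarith⟩
  have ha : sSup ({0} ∪ {h : ℝ | 1 ≤ cfg2 p (1 - p) h ∧ h < q}) = 0 := by
    rw [hS, union_empty, csSup_singleton]
  have hb : sInf ({1} ∪ {h : ℝ | 1 ≤ cfg2 p (1 - p) h ∧ q < h}) = p := by
    rw [hT, singleton_union,
      csInf_insert (((Set.finite_singleton _).insert p).bddBelow) ⟨p, by simp⟩, csInf_pair]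
    have h1 : p ⊓ (1 - p) = p := inf_eq_left.mpr (by linarith)
    rw [h1]
    exact inf_eq_right.mpr (by linarith)
  simp only [topple]
  rw [if_neg h]
  simp only [ha, hb]
  have hc1 : min (q - 0) (p - q) ≤ q := by
    have := min_le_left (q - 0) (p - q); linarith
  have hc2 : 0 < min (q - 0) (p - q) := lt_min (by linarith) (by linarith)
  rw [cfg2_self hne,
    if_neg (show ¬ p = 0 + min (q - 0) (p - q) from by intro e; linarith),
    if_neg (show ¬ p = p - min (q - 0) (p - q) from by intro e; linarith),
    if_neg (show ¬ (p = 0 ∧ (0:ℝ) < 0) from by simp)]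
  simp [hp1]

lemma compl_ii_a (p q : ℝ) (hp0 : 0 < p) (hpq : p < q) (hqv : q < 1 - p) :
    topple q (cfg2 p (1 - p)) p = 0 := by
  have hne : p ≠ 1 - p := by linarith
  have h : ¬ 1 ≤ cfg2 p (1 - p) q := by
    rw [mem_supp_cfg2]; rintro (rfl | rfl) <;> linarith
  have hS : {h : ℝ | 1 ≤ cfg2 p (1 - p) h ∧ h < q} = {p} := by
    ext x
    simp only [mem_setOf_eq, mem_singleton_iff]
    constructor
    · rintro ⟨h1, h2⟩
      rcases mem_supp_cfg2.mp h1 with rfl | rfl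
      · rfl
      · linarith
    · rintro rfl; exact ⟨mem_supp_cfg2.mpr (by tauto), hpq⟩
  have hT : {h : ℝ | 1 ≤ cfg2 p (1 - p) h ∧ q < h} = {1 - p} := by
    ext x
    simp only [mem_setOf_eq, mem_singleton_iff]
    constructor
    · rintro ⟨h1, h2⟩
      rcases mem_supp_cfg2.mp h1 with rfl | rfl
      · linarith
      · rfl
    · rintro rfl; exact ⟨mem_supp_cfg2.mpr (by tauto), hqv⟩
  have ha : sSup ({0} ∪ {h : ℝ | 1 ≤ cfg2 p (1 - p) h ∧ h < q}) = p := by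
    rw [hS, singleton_union, csSup_insert (Set.finite_singleton _).bddAbove ⟨p, rfl⟩,
      csSup_singleton]
    exact sup_eq_right.mpr (by linarith)
  have hb : sInf ({1} ∪ {h : ℝ | 1 ≤ cfg2 p (1 - p) h ∧ q < h}) = 1 - p := by
    rw [hT, singleton_union, csInf_insert (Set.finite_singleton _).bddBelow ⟨1 - p, rfl⟩,
      csInf_singleton]
    exact inf_eq_right.mpr (by linarith)
  simp only [topple]
  rw [if_neg h]
  simp only [ha, hb]
  have hc1 : 0 < min (q - p) (1 - p - q) := lt_min (by linarith) (by linarith)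
  have hc2 : min (q - p) (1 - p - q) ≤ 1 - p - q := min_le_right _ _
  rw [cfg2_self hne,
    if_neg (show ¬ p = p + min (q - p) (1 - p - q) from by intro e; linarith),
    if_neg (show ¬ p = 1 - p - min (q - p) (1 - p - q) from by intro e; linarith),
    if_neg (show ¬ (p = 1 - p ∧ (1:ℝ) - p < 1) from by rintro ⟨e, _⟩; exact hne e)]
  simp [hp0]

lemma compl_ii_b (p q : ℝ) (hp1 : p < 1) (hvq : 1 - p < q) (hqp : q < p) :
    topple q (cfg2 p (1 - p)) p = 0 := by
  have hne : p ≠ 1 - p := by linarith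
  have h : ¬ 1 ≤ cfg2 p (1 - p) q := by
    rw [mem_supp_cfg2]; rintro (rfl | rfl) <;> linarith
  have hS : {h : ℝ | 1 ≤ cfg2 p (1 - p) h ∧ h < q} = {1 - p} := by
    ext x
    simp only [mem_setOf_eq, mem_singleton_iff]
    constructor
    · rintro ⟨h1, h2⟩
      rcases mem_supp_cfg2.mp h1 with rfl | rfl
      · linarith
      · rfl
    · rintro rfl; exact ⟨mem_supp_cfg2.mpr (by tauto), hvq⟩
  have hT : {h : ℝ | 1 ≤ cfg2 p (1 - p) h ∧ q < h} = {p} := by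
    ext x
    simp only [mem_setOf_eq, mem_singleton_iff]
    constructor
    · rintro ⟨h1, h2⟩
      rcases mem_supp_cfg2.mp h1 with rfl | rfl
      · rfl
      · linarith
    · rintro rfl; exact ⟨mem_supp_cfg2.mpr (by tauto), hqp⟩
  have ha : sSup ({0} ∪ {h : ℝ | 1 ≤ cfg2 p (1 - p) h ∧ h < q}) = 1 - p := by
    rw [hS, singleton_union, csSup_insert (Set.finite_singleton _).bddAbove ⟨1 - p, rfl⟩,
      csSup_singleton]
    exact sup_eq_right.mpr (by linarith)
  have hb : sInf ({1} ∪ {h : ℝ | 1 ≤ cfg2 p (1 - p) h ∧ q < h}) = p := by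
    rw [hT, singleton_union, csInf_insert (Set.finite_singleton _).bddBelow ⟨p, rfl⟩,
      csInf_singleton]
    exact inf_eq_right.mpr (by linarith)
  simp only [topple]
  rw [if_neg h]
  simp only [ha, hb]
  have hc1 : 0 < min (q - (1 - p)) (p - q) := lt_min (by linarith) (by linarith)
  have hc2 : min (q - (1 - p)) (p - q) ≤ p - q := min_le_right _ _
  rw [cfg2_self hne,
    if_neg (show ¬ p = 1 - p + min (q - (1 - p)) (p - q) from by intro e; linarith),
    if_neg (show ¬ p = p - min (q - (1 - p)) (p - q) from by intro e; linarith),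
    if_neg (show ¬ (p = 1 - p ∧ (0:ℝ) < 1 - p) from by rintro ⟨e, _⟩; exact hne e)]
  simp [hp1]

lemma compl_iii (p q : ℝ) (hvp : 1 - p < p) (hpq : p < q) (hq1 : q < 1) :
    topple q (cfg2 p (1 - p)) p = 0 := by
  have hp0 : (0:ℝ) < p := by linarith
  have hne : p ≠ 1 - p := by linarith
  have h : ¬ 1 ≤ cfg2 p (1 - p) q := by
    rw [mem_supp_cfg2]; rintro (rfl | rfl) <;> linarith
  have hS : {h : ℝ | 1 ≤ cfg2 p (1 - p) h ∧ h < q} = {p, 1 - p} := by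
    ext x
    simp only [mem_setOf_eq, mem_insert_iff, mem_singleton_iff]
    constructor
    · rintro ⟨h1, _⟩; exact mem_supp_cfg2.mp h1
    · rintro (rfl | rfl) <;> exact ⟨mem_supp_cfg2.mpr (by tauto), by linarith⟩
  have hT : {h : ℝ | 1 ≤ cfg2 p (1 - p) h ∧ q < h} = ∅ := by
    ext x
    simp only [mem_setOf_eq, mem_empty_iff_false, iff_false, not_and]
    rw [mem_supp_cfg2]; rintro (rfl | rfl) <;> intro hx <;> linarith
  have ha : sSup ({0} ∪ {h : ℝ | 1 ≤ cfg2 p (1 - p) h ∧ h < q}) = p := by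
    rw [hS, singleton_union,
      csSup_insert (((Set.finite_singleton _).insert p).bddAbove) ⟨p, by simp⟩, csSup_pair]
    have h1 : p ⊔ (1 - p) = p := sup_eq_left.mpr (by linarith)
    rw [h1]
    exact sup_eq_right.mpr (by linarith)
  have hb : sInf ({1} ∪ {h : ℝ | 1 ≤ cfg2 p (1 - p) h ∧ q < h}) = 1 := by
    rw [hT, union_empty, csInf_singleton]
  simp only [topple]
  rw [if_neg h]
  simp only [ha, hb]
  have hc1 : 0 < min (q - p) (1 - q) := lt_min (by linarith) (by linarith)
  have hc2 : min (q - p) (1 - q) ≤ 1 - q := min_le_right _ _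
  rw [cfg2_self hne,
    if_neg (show ¬ p = p + min (q - p) (1 - q) from by intro e; linarith),
    if_neg (show ¬ p = 1 - min (q - p) (1 - q) from by intro e; linarith),
    if_neg (show ¬ (p = 1 ∧ (1:ℝ) < 1) from by rintro ⟨_, e⟩; exact lt_irrefl 1 e)]
  simp [hp0]

lemma supp_ite_nat (a : ℝ) :
    (Function.support fun x : ℝ => if x = a then (1:ℕ) else 0) ⊆ {a} := by
  intro x hx
  by_contra hxa
  simp only [mem_singleton_iff] at hxa
  simp [Function.mem_support, if_neg hxa] at hx

lemma supp_ite_real (a : ℝ) (f : ℝ → ℝ) :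
    (Function.support fun x : ℝ => (if x = a then (1:ℝ) else 0) * f x) ⊆ {a} := by
  intro x hx
  by_contra hxa
  simp only [mem_singleton_iff] at hxa
  simp [Function.mem_support, if_neg hxa] at hx

lemma totalMass_cfg3 (a b c : ℝ) (hab : a ≠ b) (hac : a ≠ c) (hbc : b ≠ c) :
    totalMass (cfg3 a b c) = 3 := by
  unfold totalMass cfg3
  rw [finsum_add_distrib
      (((Set.finite_singleton a).union (Set.finite_singleton b)).subset
        (fun x hx => by
          rcases Function.mem_support.mp hx |> fun h => h with h
          by_contra hm
          simp only [mem_union, mem_singleton_iff, not_or] at hm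
          simp [if_neg hm.1, if_neg hm.2] at h))
      ((Set.finite_singleton c).subset (supp_ite_nat c)),
    finsum_add_distrib
      ((Set.finite_singleton a).subset (supp_ite_nat a))
      ((Set.finite_singleton b).subset (supp_ite_nat b)),
    finsum_eq_single _ a (fun x hx => if_neg hx),
    finsum_eq_single _ b (fun x hx => if_neg hx),
    finsum_eq_single _ c (fun x hx => if_neg hx)]
  simp

lemma weightedSum_cfg3 (a b c : ℝ) (hab : a ≠ b) (hac : a ≠ c) (hbc : b ≠ c) :
    weightedSum (cfg3 a b c) = a + b + c := by
  unfold weightedSum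
  have he : (fun h : ℝ => ((cfg3 a b c h : ℝ) * h)) =
      fun h : ℝ => ((if h = a then (1:ℝ) else 0) * h + (if h = b then (1:ℝ) else 0) * h)
        + (if h = c then (1:ℝ) else 0) * h := by
    funext h
    unfold cfg3
    push_cast
    split_ifs <;> ring
  rw [he,
    finsum_add_distrib
      (((Set.finite_singleton a).union (Set.finite_singleton b)).subset
        (fun x hx => by
          by_contra hm
          simp only [mem_union, mem_singleton_iff, not_or] at hm
          simp [Function.mem_support, if_neg hm.1, if_neg hm.2] at hx))
      ((Set.finite_singleton c).subset (supp_ite_real c _)),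
    finsum_add_distrib
      ((Set.finite_singleton a).subset (supp_ite_real a _))
      ((Set.finite_singleton b).subset (supp_ite_real b _)),
    finsum_eq_single _ a (fun x hx => by rw [if_neg hx, zero_mul]),
    finsum_eq_single _ b (fun x hx => by rw [if_neg hx, zero_mul]),
    finsum_eq_single _ c (fun x hx => by rw [if_neg hx, zero_mul])]
  simp

lemma isMinimal_cfg3 (p q r : ℝ) (hp : p ∈ Ioo (0:ℝ) 1) (hq : q ∈ Ioo (0:ℝ) 1)
    (hr : r ∈ Ioo (0:ℝ) 1) (hpq : p ≠ q) (hpr : p ≠ r) (hqr : q ≠ r)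
    (z : ℤ) (hz : p + q + r = (z : ℝ))
    (h01 : 0 < p + q) (h2 : p + q < 2) (h1 : p + q ≠ 1) :
    IsMinimalConfig {p, q} (cfg3 p q r) := by
  classical
  have hsupp : Function.support (cfg3 p q r) ⊆ {p, q, r} := by
    intro x hx
    by_contra hm
    simp only [mem_insert_iff, mem_singleton_iff, not_or] at hm
    simp [Function.mem_support, cfg3, if_neg hm.1, if_neg hm.2.1, if_neg hm.2.2] at hx
  refine ⟨⟨⟨?_, ?_⟩, z, ?_⟩, ?_, ?_⟩
  · exact (((Set.finite_singleton r).insert q).insert p).subset hsupp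
  · intro x hx
    rcases hsupp hx with rfl | rfl | rfl
    exacts [hp, hq, hr]
  · rw [weightedSum_cfg3 p q r hpq hpr hqr, hz]
  · rintro x (rfl | rfl)
    · simp [cfg3, hpq, hpr]
    · simp [cfg3, Ne.symm hpq, hqr]
  · intro ν ⟨⟨hfin, _⟩, w, hw⟩ hν
    have hνp : 1 ≤ ν p := hν p (by simp)
    have hνq : 1 ≤ ν q := hν q (by simp)
    by_contra hcon
    push_neg at hcon
    rw [totalMass_cfg3 p q r hpq hpr hqr] at hcon
    have hle2 : totalMass ν ≤ 2 := by omega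
    have htot : totalMass ν = ∑ x ∈ hfin.toFinset, ν x := by
      unfold totalMass
      exact finsum_eq_sum_of_support_subset _ (by simp)
    have hpmem : p ∈ hfin.toFinset := by
      simp only [Set.Finite.mem_toFinset, Function.mem_support]; omega
    have hqmem : q ∈ hfin.toFinset := by
      simp only [Set.Finite.mem_toFinset, Function.mem_support]; omega
    -- everything outside {p, q} vanishes
    have hout : ∀ x : ℝ, x ≠ p → x ≠ q → ν x = 0 := by
      intro x hxp hxq
      by_contra hx0
      have hxmem : x ∈ hfin.toFinset := by
        simp only [Set.Finite.mem_toFinset, Function.mem_support]; exact hx0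
      have hsub : ({p, q, x} : Finset ℝ) ⊆ hfin.toFinset := by
        intro y hy
        simp only [Finset.mem_insert, Finset.mem_singleton] at hy
        rcases hy with rfl | rfl | rfl <;> assumption
      have hsum : ∑ y ∈ ({p, q, x} : Finset ℝ), ν y ≤ ∑ y ∈ hfin.toFinset, ν y :=
        Finset.sum_le_sum_of_subset hsub
      rw [Finset.sum_insert (by simp [hpq, Ne.symm hxp]),
        Finset.sum_insert (by simp [Ne.symm hxq]), Finset.sum_singleton] at hsum
      omega
    have hνp1 : ν p = 1 ∧ ν q = 1 := by
      have hsub : ({p, q} : Finset ℝ) ⊆ hfin.toFinset := by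
        intro y hy
        simp only [Finset.mem_insert, Finset.mem_singleton] at hy
        rcases hy with rfl | rfl <;> assumption
      have hsum : ∑ y ∈ ({p, q} : Finset ℝ), ν y ≤ ∑ y ∈ hfin.toFinset, ν y :=
        Finset.sum_le_sum_of_subset hsub
      rw [Finset.sum_insert (by simp [hpq]), Finset.sum_singleton] at hsum
      omega
    -- weighted sum is p + q
    have hws : weightedSum ν = p + q := by
      unfold weightedSum
      rw [finsum_eq_sum_of_support_subset _
        (s := ({p, q} : Finset ℝ))
        (by
          intro x hx
          simp only [Function.mem_support] at hx
          by_contra hm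
          simp only [Finset.coe_insert, Finset.coe_singleton, mem_insert_iff,
            mem_singleton_iff, not_or] at hm
          rw [hout x hm.1 hm.2] at hx
          simp at hx)]
      rw [Finset.sum_insert (by simp [hpq]), Finset.sum_singleton, hνp1.1, hνp1.2]
      push_cast
      ring
    rw [hws] at hw
    have hw0 : (0:ℝ) < (w : ℝ) := by rw [← hw]; exact h01
    have hw2 : ((w : ℝ)) < 2 := by rw [← hw]; exact h2
    have hw1 : ((w : ℝ)) ≠ 1 := by rw [← hw]; exact h1
    have : (0:ℤ) < w := by exact_mod_cast hw0
    have : w < 2 := by exact_mod_cast hw2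
    have : w ≠ 1 := by exact_mod_cast hw1
    omega

lemma relaxRound_pair (p q : ℝ) (μ : ℝ → ℕ) :
    relaxRound [p, q] μ = topple q (topple p μ) := rfl

lemma mem_pair_set (p q : ℝ) : {x : ℝ | x ∈ [p, q]} = ({p, q} : Set ℝ) := by
  ext x; simp [Set.mem_insert_iff]

lemma relaxLength_eq_one (p q : ℝ)
    (h : IsMinimalConfig {p, q} (topple q (topple p (fun _ => 0)))) :
    relaxLength [p, q] = 1 := by
  have h1 : 1 ∈ {N | 1 ≤ N ∧
      IsMinimalConfig {x | x ∈ [p, q]} ((relaxRound [p, q])^[N] fun _ => 0)} := by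
    refine ⟨le_refl 1, ?_⟩
    rw [Function.iterate_one, relaxRound_pair, mem_pair_set]
    exact h
  exact le_antisymm (Nat.sInf_le h1) (Nat.sInf_mem ⟨1, h1⟩).1

lemma relaxLength_ne_one (p q : ℝ)
    (h : topple q (topple p (fun _ => 0)) p = 0) :
    relaxLength [p, q] ≠ 1 := by
  intro hL
  unfold relaxLength at hL
  set S := {N | 1 ≤ N ∧
      IsMinimalConfig {x | x ∈ [p, q]} ((relaxRound [p, q])^[N] fun _ => 0)} with hSdef
  have hne : S.Nonempty := by
    by_contra hemp
    rw [Set.not_nonempty_iff_eq_empty] at hemp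
    rw [hemp, Nat.sInf_empty] at hL
    exact absurd hL (by norm_num)
  have hmem := Nat.sInf_mem hne
  rw [hL] at hmem
  have h2 := hmem.2.2.1 p (by simp)
  rw [Function.iterate_one, relaxRound_pair] at h2
  omega

lemma good_T1 (p q : ℝ) (hp : 1/2 < p) (hp1 : p < 1) (hq0 : 0 < q) (hq : q < 1 - p)
    (hgen : p + 2*q ≠ 1) : relaxLength [p, q] = 1 := by
  have hgen' : 1 - p - q ≠ q := fun e => hgen (by linarith)
  apply relaxLength_eq_one
  rw [topple_zero p (by linarith) hp1, toppleA p q hp hp1 hq0 hq hgen']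
  exact isMinimal_cfg3 p q (1 - p - q)
    ⟨by linarith, hp1⟩ ⟨hq0, by linarith⟩ ⟨by linarith, by linarith⟩
    (by intro e; linarith) (by intro e; linarith) (Ne.symm hgen')
    1 (by push_cast; ring) (by linarith) (by linarith) (by intro e; linarith)

lemma good_T2 (p q : ℝ) (hp0 : 0 < p) (hp : p < 1/2) (hq : 1 - p < q) (hq1 : q < 1)
    (hgen : p + 2*q ≠ 2) : relaxLength [p, q] = 1 := by
  have hgen' : 2 - p - q ≠ q := fun e => hgen (by linarith)
  apply relaxLength_eq_one
  rw [topple_zero p hp0 (by linarith), toppleB p q hp0 hp hq hq1 hgen']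
  exact isMinimal_cfg3 p q (2 - p - q)
    ⟨hp0, by linarith⟩ ⟨by linarith, hq1⟩ ⟨by linarith, by linarith⟩
    (by intro e; linarith) (by intro e; linarith) (Ne.symm hgen')
    2 (by push_cast; ring) (by linarith) (by linarith) (by intro e; linarith)

lemma bad_compl (p q : ℝ) (hp : p ∈ Ioo (0:ℝ) 1) (hq : q ∈ Ioo (0:ℝ) 1) (hpq : p ≠ q)
    (hhalf : p ≠ 1/2) (hsum : p + q ≠ 1)
    (hT : ¬ ((1/2 < p ∧ q < 1 - p) ∨ (p < 1/2 ∧ 1 - p < q))) :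
    relaxLength [p, q] ≠ 1 := by
  apply relaxLength_ne_one
  rw [topple_zero p hp.1 hp.2]
  push_neg at hT
  rcases lt_or_gt_of_ne hhalf with hh | hh
  · have hqv : q < 1 - p := lt_of_le_of_ne (hT.2 hh) (fun e => hsum (by linarith))
    rcases lt_or_gt_of_ne hpq with h1 | h1
    · exact compl_ii_a p q hp.1 h1 hqv
    · exact compl_i p q hq.1 h1 (by linarith)
  · have hqv : 1 - p < q := lt_of_le_of_ne (hT.1 hh) (fun e => hsum (by linarith))
    rcases lt_or_gt_of_ne hpq with h1 | h1
    · exact compl_iii p q (by linarith) h1 hq.2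
    · exact compl_ii_b p q hp.2 hqv h1

lemma graph_null (f : ℝ → ℝ) (hf : Continuous f) :
    volume {x : ℝ × ℝ | x.2 = f x.1} = 0 := by
  have hms : MeasurableSet {x : ℝ × ℝ | x.2 = f x.1} :=
    (isClosed_eq continuous_snd (hf.comp continuous_fst)).measurableSet
  rw [Measure.volume_eq_prod, Measure.prod_apply hms]
  have hfib : ∀ x : ℝ, volume (Prod.mk x ⁻¹' {x : ℝ × ℝ | x.2 = f x.1}) = 0 := by
    intro x
    refine measure_mono_null ?_ (measure_singleton (f x))
    intro y hy
    simpa using hy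
  rw [lintegral_congr hfib, lintegral_zero]

lemma vert_null (c : ℝ) : volume {x : ℝ × ℝ | x.1 = c} = 0 := by
  have : {x : ℝ × ℝ | x.1 = c} = ({c} : Set ℝ) ×ˢ (univ : Set ℝ) := by
    ext x
    constructor
    · intro h; exact ⟨h, trivial⟩
    · intro h; exact h.1
  rw [this, Measure.volume_eq_prod, Measure.prod_prod, Real.volume_singleton, zero_mul]

noncomputable def T1 : Set (ℝ × ℝ) := regionBetween (fun _ => (0:ℝ)) (fun a => 1 - a) (Ioo (1/2) 1)
noncomputable def T2 : Set (ℝ × ℝ) := regionBetween (fun a => 1 - a) (fun _ => (1:ℝ)) (Ioo 0 (1/2))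

def Zbad : Set (ℝ × ℝ) :=
  {x | x.1 = 1/2} ∪ ({x | x.2 = 1 - x.1} ∪ ({x | x.2 = (1 - x.1)/2} ∪ {x | x.2 = (2 - x.1)/2}))

lemma Zbad_null : volume Zbad = 0 := by
  unfold Zbad
  refine measure_union_null (vert_null _) (measure_union_null ?_ (measure_union_null ?_ ?_))
  · exact graph_null (fun a => 1 - a) (by continuity)
  · exact graph_null (fun a => (1 - a)/2) (by continuity)
  · exact graph_null (fun a => (2 - a)/2) (by continuity)

lemma mem_T1 (x : ℝ × ℝ) : x ∈ T1 ↔ (1/2 < x.1 ∧ x.1 < 1) ∧ 0 < x.2 ∧ x.2 < 1 - x.1 := by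
  unfold T1 regionBetween
  simp [Set.mem_setOf_eq, Set.mem_Ioo]

lemma mem_T2 (x : ℝ × ℝ) : x ∈ T2 ↔ (0 < x.1 ∧ x.1 < 1/2) ∧ 1 - x.1 < x.2 ∧ x.2 < 1 := by
  unfold T2 regionBetween
  simp [Set.mem_setOf_eq, Set.mem_Ioo]

lemma lengthLocus_sub : lengthLocus 1 \ (T1 ∪ T2) ⊆ Zbad := by
  rintro ⟨p, q⟩ ⟨hL, hT⟩
  obtain ⟨hp, hq, hpq, hlen⟩ := hL
  by_contra hZ
  simp only [Zbad, mem_union, mem_setOf_eq, not_or] at hZ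
  obtain ⟨hZ1, hZ2, hZ3, hZ4⟩ := hZ
  refine bad_compl p q hp hq hpq hZ1 (fun e => hZ2 (by linarith)) ?_ hlen
  rintro (⟨h1, h2⟩ | ⟨h1, h2⟩) <;> apply hT
  · exact Or.inl ((mem_T1 _).mpr ⟨⟨h1, hp.2⟩, hq.1, h2⟩)
  · exact Or.inr ((mem_T2 _).mpr ⟨⟨hp.1, h1⟩, h2, hq.2⟩)

lemma sub_lengthLocus : (T1 ∪ T2) \ lengthLocus 1 ⊆ Zbad := by
  rintro ⟨p, q⟩ ⟨hT, hL⟩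
  by_contra hZ
  simp only [Zbad, mem_union, mem_setOf_eq, not_or] at hZ
  obtain ⟨hZ1, hZ2, hZ3, hZ4⟩ := hZ
  apply hL
  rcases hT with hT | hT
  · obtain ⟨⟨h1, h2⟩, h3, h4⟩ := (mem_T1 _).mp hT
    exact ⟨⟨by linarith, h2⟩, ⟨h3, by linarith⟩, by intro e; linarith,
      good_T1 p q h1 h2 h3 h4 (fun e => hZ3 (show q = (1 - p)/2 from by linarith))⟩
  · obtain ⟨⟨h1, h2⟩, h3, h4⟩ := (mem_T2 _).mp hT
    exact ⟨⟨h1, by linarith⟩, ⟨by linarith, h4⟩, by intro e; linarith,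
      good_T2 p q h1 h2 h3 h4 (fun e => hZ4 (show q = (2 - p)/2 from by linarith))⟩

lemma contIntOn {f : ℝ → ℝ} (hf : Continuous f) (a b : ℝ) : IntegrableOn f (Ioo a b) := by
  rcases le_total a b with h | h
  · exact Iff.mp integrableOn_Ioc_iff_integrableOn_Ioo
      ((intervalIntegrable_iff_integrableOn_Ioc_of_le h).mp (hf.intervalIntegrable a b))
  · rw [Ioo_eq_empty (not_lt.mpr h)]
    exact integrableOn_empty

lemma vol_T1 : volume T1 = ENNReal.ofReal (1/8) := by
  unfold T1
  rw [Measure.volume_eq_prod]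
  have hi1 : IntegrableOn (fun _ : ℝ => (0:ℝ)) (Ioo (1/2:ℝ) 1) := contIntOn (by continuity) _ _
  have hi2 : IntegrableOn (fun a : ℝ => 1 - a) (Ioo (1/2:ℝ) 1) := contIntOn (by continuity) _ _
  rw [volume_regionBetween_eq_integral hi1 hi2 measurableSet_Ioo
    (fun x hx => show (0:ℝ) ≤ 1 - x from by linarith [hx.2])]
  congr 1
  simp only [Pi.sub_apply, sub_zero]
  rw [← MeasureTheory.integral_Ioc_eq_integral_Ioo, ← intervalIntegral.integral_of_le (by norm_num)]
  rw [intervalIntegral.integral_sub intervalIntegrable_const intervalIntegral.intervalIntegrable_id]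
  rw [integral_id]
  simp
  norm_num

lemma vol_T2 : volume T2 = ENNReal.ofReal (1/8) := by
  unfold T2
  rw [Measure.volume_eq_prod]
  have hi1 : IntegrableOn (fun a : ℝ => 1 - a) (Ioo (0:ℝ) (1/2)) := contIntOn (by continuity) _ _
  have hi2 : IntegrableOn (fun _ : ℝ => (1:ℝ)) (Ioo (0:ℝ) (1/2)) := contIntOn (by continuity) _ _
  rw [volume_regionBetween_eq_integral hi1 hi2 measurableSet_Ioo
    (fun x hx => show 1 - x ≤ (1:ℝ) from by linarith [hx.1])]
  congr 1
  simp only [Pi.sub_apply]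
  rw [show (fun y : ℝ => (1:ℝ) - (1 - y)) = fun y : ℝ => y from by funext y; ring]
  rw [← MeasureTheory.integral_Ioc_eq_integral_Ioo, ← intervalIntegral.integral_of_le (by norm_num)]
  rw [integral_id]
  norm_num

/-- The locus `L(p,q) = 1` has Lebesgue measure `1/4`. -/
theorem measure_lengthLocus_one : volume (lengthLocus 1) = 1 / 4 := by
  have hae : lengthLocus 1 =ᶠ[ae (volume : Measure (ℝ × ℝ))] ((T1 ∪ T2 : Set (ℝ × ℝ))) :=
    ae_eq_set.mpr ⟨measure_mono_null lengthLocus_sub Zbad_null,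
      measure_mono_null sub_lengthLocus Zbad_null⟩
  rw [measure_congr hae]
  have hdisj : Disjoint T1 T2 := by
    rw [Set.disjoint_left]
    intro x hx1 hx2
    have h1 := ((mem_T1 _).mp hx1).1.1
    have h2 := ((mem_T2 _).mp hx2).1.2
    linarith
  have hT2m : MeasurableSet T2 := by
    unfold T2
    exact measurableSet_regionBetween ((continuous_const.sub continuous_id).measurable)
      measurable_const measurableSet_Ioo
  rw [measure_union hdisj hT2m, vol_T1, vol_T2,
    ← ENNReal.ofReal_add (by norm_num) (by norm_num)]
  norm_num
  rw [ENNReal.ofReal_div_of_pos (by norm_num)]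
  norm_num
end

section
/- The set {(p, q) ∈ (0,1)² : p ≠ q and L(p, q) = 2} has two-dimensional Lebesgue measure 21/40. -/
open Classical MeasureTheory Function Set

noncomputable section
namespace SandAux

/-- two-point configuration -/
def c2 (a b : ℝ) : ℝ → ℕ := fun x => if x = a then 1 else if x = b then 1 else 0
/-- three-point configuration -/
def c3 (a b c : ℝ) : ℝ → ℕ := fun x => if x = a then 1 else if x = b then 1 else if x = c then 1 else 0

lemma one_le_c2 {a b x : ℝ} : 1 ≤ c2 a b x ↔ x = a ∨ x = b := by
  unfold c2; split_ifs <;> simp_all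

lemma one_le_c3 {a b c x : ℝ} : 1 ≤ c3 a b c x ↔ x = a ∨ x = b ∨ x = c := by
  unfold c3; split_ifs <;> simp_all

lemma topple_eq (μ : ℝ → ℕ) (p a b : ℝ) (hp : ¬ 1 ≤ μ p)
    (ha : IsGreatest ({0} ∪ {h | 1 ≤ μ h ∧ h < p}) a)
    (hb : IsLeast ({1} ∪ {h | 1 ≤ μ h ∧ p < h}) b) :
    topple p μ = fun x =>
      μ x + (if x = a + min (p - a) (b - p) then 1 else 0)
          + (if x = b - min (p - a) (b - p) then 1 else 0)
          - (if x = a ∧ 0 < a then 1 else 0) - (if x = b ∧ b < 1 then 1 else 0) := by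
  simp only [topple, if_neg hp, ha.csSup_eq, hb.csInf_eq]

lemma topple_mem (p : ℝ) (μ : ℝ → ℕ) (h : 1 ≤ μ p) : topple p μ = μ := by
  simp only [topple, if_pos h]

lemma isg0 (μ : ℝ → ℕ) (p : ℝ) (h : ∀ y, 1 ≤ μ y → ¬ y < p) :
    IsGreatest ({0} ∪ {h | 1 ≤ μ h ∧ h < p}) 0 := by
  constructor
  · exact Or.inl rfl
  · rintro y (rfl | ⟨hy, hyp⟩)
    · exact le_refl 0
    · exact absurd hyp (h y hy)

lemma isg (μ : ℝ → ℕ) (p g : ℝ) (hg : 1 ≤ μ g) (hgp : g < p) (h0 : 0 ≤ g)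
    (h : ∀ y, 1 ≤ μ y → y < p → y ≤ g) :
    IsGreatest ({0} ∪ {h | 1 ≤ μ h ∧ h < p}) g := by
  constructor
  · exact Or.inr ⟨hg, hgp⟩
  · rintro y (rfl | ⟨hy, hyp⟩)
    · exact h0
    · exact h y hy hyp

lemma isl1 (μ : ℝ → ℕ) (p : ℝ) (h : ∀ y, 1 ≤ μ y → ¬ p < y) :
    IsLeast ({1} ∪ {h | 1 ≤ μ h ∧ p < h}) 1 := by
  constructor
  · exact Or.inl rfl
  · rintro y (rfl | ⟨hy, hyp⟩)
    · exact le_refl 1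
    · exact absurd hyp (h y hy)

lemma isl (μ : ℝ → ℕ) (p g : ℝ) (hg : 1 ≤ μ g) (hgp : p < g) (h1 : g ≤ 1)
    (h : ∀ y, 1 ≤ μ y → p < y → g ≤ y) :
    IsLeast ({1} ∪ {h | 1 ≤ μ h ∧ p < h}) g := by
  constructor
  · exact Or.inr ⟨hg, hgp⟩
  · rintro y (rfl | ⟨hy, hyp⟩)
    · exact h1
    · exact h y hy hyp

end SandAux
namespace SandAux

lemma support_c3 (u v w : ℝ) : Function.support (c3 u v w) = {u, v, w} := by
  ext x; unfold c3; simp only [Function.mem_support]; split_ifs <;> simp_all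

lemma weightedSum_c3 (u v w : ℝ) (huv : u ≠ v) (huw : u ≠ w) (hvw : v ≠ w) :
    weightedSum (c3 u v w) = u + v + w := by
  unfold weightedSum
  have hsub : Function.support (fun h => ((c3 u v w h : ℝ) * h)) ⊆ ({u, v, w} : Finset ℝ) := by
    intro x hx
    simp only [Function.mem_support] at hx
    have : c3 u v w x ≠ 0 := by
      intro h; rw [h] at hx; simp at hx
    unfold c3 at this
    split_ifs at this with h1 h2 h3
    · simp [h1]
    · simp [h2]
    · simp [h3]
    · exact absurd rfl this
  rw [finsum_eq_sum_of_support_subset _ hsub]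
  rw [Finset.sum_insert (by simp [huv, huw]), Finset.sum_insert (by simp [hvw]),
    Finset.sum_singleton]
  unfold c3
  simp [huv, huw, hvw, huv.symm, huw.symm, hvw.symm]
  ring

lemma totalMass_c3 (u v w : ℝ) (huv : u ≠ v) (huw : u ≠ w) (hvw : v ≠ w) :
    totalMass (c3 u v w) = 3 := by
  unfold totalMass
  have hsub : Function.support (c3 u v w) ⊆ ({u, v, w} : Finset ℝ) := by
    rw [support_c3]; intro x; simp
  rw [finsum_eq_sum_of_support_subset _ hsub]
  rw [Finset.sum_insert (by simp [huv, huw]), Finset.sum_insert (by simp [hvw]),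
    Finset.sum_singleton]
  unfold c3
  simp [huv, huw, hvw, huv.symm, huw.symm, hvw.symm]

lemma mass_lower (ν : ℝ → ℕ) (hν : Admissible ν) (p q : ℝ) (hpq : p ≠ q)
    (hp : 1 ≤ ν p) (hq : 1 ≤ ν q) (h0 : 0 < p + q) (h2 : p + q < 2) (h1 : p + q ≠ 1) :
    3 ≤ totalMass ν := by
  obtain ⟨⟨hfin, hIoo⟩, z, hz⟩ := hν
  have hsub : Function.support ν ⊆ hfin.toFinset := by
    intro x hx; simpa using hx
  have hmass : totalMass ν = ∑ x ∈ hfin.toFinset, ν x :=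
    finsum_eq_sum_of_support_subset _ hsub
  have hpS : p ∈ hfin.toFinset := by simp [Function.mem_support]; omega
  have hqS : q ∈ hfin.toFinset := by simp [Function.mem_support]; omega
  have hT : ({p, q} : Finset ℝ) ⊆ hfin.toFinset := by
    intro x hx; simp at hx; rcases hx with rfl | rfl <;> assumption
  have hTsum : ∑ x ∈ ({p, q} : Finset ℝ), ν x = ν p + ν q := by
    rw [Finset.sum_insert (by simp [hpq]), Finset.sum_singleton]
  have h2le : ν p + ν q ≤ totalMass ν := by
    rw [hmass, ← hTsum]
    exact Finset.sum_le_sum_of_subset hT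
  by_contra hlt
  push_neg at hlt
  -- totalMass ν ≤ 2, so = 2, ν p = ν q = 1, support = {p,q}
  have hm2 : totalMass ν = 2 := by omega
  have hνp : ν p = 1 := by omega
  have hνq : ν q = 1 := by omega
  have hrest : ∑ x ∈ hfin.toFinset \ {p, q}, ν x = 0 := by
    have := Finset.sum_sdiff hT (f := ν)
    omega
  have hsup : Function.support ν ⊆ {p, q} := by
    intro x hx
    by_contra hxn
    have hxS : x ∈ hfin.toFinset \ ({p, q} : Finset ℝ) := by
      simp only [Finset.mem_sdiff]
      constructor
      · simpa using hx
      · simpa using hxn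
    have : ν x = 0 := by
      have := Finset.sum_eq_zero_iff.mp hrest x hxS
      exact this
    exact hx this
  have hws : weightedSum ν = p + q := by
    unfold weightedSum
    have hsub2 : Function.support (fun h => ((ν h : ℝ) * h)) ⊆ ({p, q} : Finset ℝ) := by
      intro x hx
      simp only [Function.mem_support] at hx
      have : ν x ≠ 0 := by intro h; rw [h] at hx; simp at hx
      have := hsup this
      simpa using this
    rw [finsum_eq_sum_of_support_subset _ hsub2,
      Finset.sum_insert (by simp [hpq]), Finset.sum_singleton, hνp, hνq]
    push_cast; ring
  rw [hws] at hz
  have hz1 : z = 1 := by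
    have hz0 : (0 : ℝ) < z := by rw [← hz]; exact h0
    have hz2 : (z : ℝ) < 2 := by rw [← hz]; exact h2
    have : (0 : ℤ) < z := by exact_mod_cast hz0
    have : z < 2 := by exact_mod_cast hz2
    omega
  rw [hz1] at hz
  simp at hz
  exact h1 hz

lemma mem_pair_set (p q x : ℝ) : x ∈ ({y | y ∈ [p, q]} : Set ℝ) ↔ x = p ∨ x = q := by
  simp

lemma isMinimalConfig_c3 (u v w p q : ℝ)
    (hu : u ∈ Set.Ioo (0:ℝ) 1) (hv : v ∈ Set.Ioo (0:ℝ) 1) (hw : w ∈ Set.Ioo (0:ℝ) 1)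
    (huv : u ≠ v) (huw : u ≠ w) (hvw : v ≠ w)
    (hsum : ∃ z : ℤ, u + v + w = (z : ℝ))
    (hp : p = u ∨ p = v ∨ p = w) (hq : q = u ∨ q = v ∨ q = w)
    (hpq : p ≠ q) (h1 : p + q ≠ 1) :
    IsMinimalConfig {y | y ∈ [p, q]} (c3 u v w) := by
  obtain ⟨z, hz⟩ := hsum
  have hpIoo : p ∈ Set.Ioo (0:ℝ) 1 := by rcases hp with rfl | rfl | rfl <;> assumption
  have hqIoo : q ∈ Set.Ioo (0:ℝ) 1 := by rcases hq with rfl | rfl | rfl <;> assumption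
  refine ⟨⟨⟨?_, ?_⟩, z, by rw [weightedSum_c3 u v w huv huw hvw]; exact hz⟩, ?_, ?_⟩
  · rw [support_c3]
    exact (Set.finite_singleton w).insert v |>.insert u
  · rw [support_c3]
    rintro x (rfl | rfl | rfl) <;> simp_all
  · intro r hr
    rw [mem_pair_set] at hr
    rw [one_le_c3]
    rcases hr with rfl | rfl
    · exact hp
    · exact hq
  · intro ν hν hνpq
    rw [totalMass_c3 u v w huv huw hvw]
    exact mass_lower ν hν p q hpq
      (hνpq p (by simp)) (hνpq q (by simp))
      (by have := hpIoo.1; have := hqIoo.1; linarith)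
      (by have := hpIoo.2; have := hqIoo.2; linarith) h1

lemma not_minimal_of_zero (μ : ℝ → ℕ) (p q : ℝ) (h : μ p = 0) :
    ¬ IsMinimalConfig {y | y ∈ [p, q]} μ := by
  rintro ⟨-, hs, -⟩
  have := hs p (by simp)
  omega

lemma relaxRound_pair (p q : ℝ) (μ : ℝ → ℕ) :
    relaxRound [p, q] μ = topple q (topple p μ) := rfl

lemma iterate_two (p q : ℝ) :
    (relaxRound [p, q])^[2] (fun _ => 0) =
      topple q (topple p (topple q (topple p (fun _ => 0)))) := by
  rw [Function.iterate_succ_apply, Function.iterate_one]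
  rfl

lemma rl_eq_two (p q : ℝ)
    (h1 : ¬ IsMinimalConfig {y | y ∈ [p, q]} (topple q (topple p (fun _ => 0))))
    (h2 : IsMinimalConfig {y | y ∈ [p, q]}
      (topple q (topple p (topple q (topple p (fun _ => 0)))))) :
    relaxLength [p, q] = 2 := by
  unfold relaxLength
  have h2' : 2 ∈ {N | 1 ≤ N ∧ IsMinimalConfig {x | x ∈ [p, q]}
      ((relaxRound [p, q])^[N] fun _ => 0)} := by
    refine ⟨one_le_two, ?_⟩
    rw [iterate_two]
    exact h2
  refine le_antisymm (Nat.sInf_le h2') ?_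
  refine le_csInf ⟨2, h2'⟩ ?_
  rintro n ⟨hn1, hn⟩
  rcases Nat.lt_or_ge n 2 with h | h
  · interval_cases n
    · exfalso
      apply h1
      rw [Function.iterate_one] at hn
      exact hn
  · exact h

lemma rl_ne_two_big (p q : ℝ)
    (h1 : ¬ IsMinimalConfig {y | y ∈ [p, q]} (topple q (topple p (fun _ => 0))))
    (h2 : ¬ IsMinimalConfig {y | y ∈ [p, q]}
      (topple q (topple p (topple q (topple p (fun _ => 0)))))) :
    relaxLength [p, q] ≠ 2 := by
  intro h
  unfold relaxLength at h
  set S := {N | 1 ≤ N ∧ IsMinimalConfig {x | x ∈ [p, q]}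
      ((relaxRound [p, q])^[N] fun _ => 0)} with hS
  rcases Set.eq_empty_or_nonempty S with he | hne
  · rw [he, Nat.sInf_empty] at h; exact two_ne_zero h.symm
  · have := Nat.sInf_mem hne
    rw [h] at this
    obtain ⟨-, hmin⟩ := this
    rw [iterate_two] at hmin
    exact h2 hmin

lemma rl_ne_two_one (p q : ℝ)
    (h1 : IsMinimalConfig {y | y ∈ [p, q]} (topple q (topple p (fun _ => 0)))) :
    relaxLength [p, q] ≠ 2 := by
  have : relaxLength [p, q] ≤ 1 := by
    apply Nat.sInf_le
    refine ⟨le_refl 1, ?_⟩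
    rw [Function.iterate_one]
    exact h1
  omega

end SandAux
namespace SandAux

lemma L0 (p : ℝ) (h0 : 0 < p) (h2 : p < 1/2) :
    topple p (fun _ => 0) = c2 p (1 - p) := by
  rw [topple_eq (fun _ => 0) p 0 1 (by simp)
    (isg0 _ _ (by intro y hy; simp at hy))
    (isl1 _ _ (by intro y hy; simp at hy))]
  have hmin : min (p - 0) (1 - p) = p := by
    rw [sub_zero, min_eq_left]; linarith
  funext x
  simp only [hmin, c2, zero_add, lt_irrefl, and_false, if_false, lt_irrefl (1:ℝ)]
  split_ifs <;> first | omega | (exfalso; linarith)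

lemma LI (p q : ℝ) (hq0 : 0 < q) (hqp : q < p) (hp : p < 1/2) (hhalf : q ≠ p/2) :
    topple q (c2 p (1 - p)) = c3 q (p - q) (1 - p) := by
  rw [topple_eq (c2 p (1-p)) q 0 p
    (by rw [one_le_c2]; push_neg; constructor <;> intro h <;> linarith)
    (isg0 _ _ (by intro y hy; rcases one_le_c2.mp hy with rfl | rfl <;> intro h <;> linarith))
    (isl _ _ p (one_le_c2.mpr (Or.inl rfl)) hqp (by linarith)
      (by intro y hy; rcases one_le_c2.mp hy with rfl | rfl <;> intro h <;> linarith))]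
  have ha : ∀ x : ℝ, (x = 0 ∧ (0:ℝ) < 0) = False := by intro x; simp
  have hb : ∀ x : ℝ, (x = p ∧ p < 1) = (x = p) := by
    intro x; simp only [eq_iff_iff, and_iff_left_iff_imp]; intro; linarith
  simp only [ha, hb, if_false, zero_add, sub_zero]
  have htri : q < p - q ∨ p - q < q := by
    rcases lt_trichotomy q (p - q) with h | h | h
    · exact Or.inl h
    · exact absurd (by linarith) hhalf
    · exact Or.inr h
  rcases htri with hm | hm
  · rw [min_eq_left (le_of_lt hm)]
    funext x; simp only [c2, c3]
    split_ifs <;> first | omega | (exfalso; linarith)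
  · rw [min_eq_right (le_of_lt hm), show p - (p - q) = q by ring]
    funext x; simp only [c2, c3]
    split_ifs <;> first | omega | (exfalso; linarith)

lemma LII (p q : ℝ) (hp0 : 0 < p) (hpq : p < q) (hq1 : q < 1 - p) (hq : q ≠ 1/2) :
    topple q (c2 p (1 - p)) = c2 q (1 - q) := by
  rw [topple_eq (c2 p (1-p)) q p (1-p)
    (by rw [one_le_c2]; push_neg; constructor <;> intro h <;> linarith)
    (isg _ _ p (one_le_c2.mpr (Or.inl rfl)) hpq (by linarith)
      (by intro y hy; rcases one_le_c2.mp hy with rfl | rfl <;> intro h <;> linarith))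
    (isl _ _ (1-p) (one_le_c2.mpr (Or.inr rfl)) hq1 (by linarith)
      (by intro y hy; rcases one_le_c2.mp hy with rfl | rfl <;> intro h <;> linarith))]
  have ha : ∀ x : ℝ, (x = p ∧ (0:ℝ) < p) = (x = p) := by
    intro x; simp only [eq_iff_iff, and_iff_left_iff_imp]; intro; linarith
  have hb : ∀ x : ℝ, (x = 1 - p ∧ 1 - p < 1) = (x = 1 - p) := by
    intro x; simp only [eq_iff_iff, and_iff_left_iff_imp]; intro; linarith
  simp only [ha, hb]
  have htri : q - p < 1 - p - q ∨ 1 - p - q < q - p := by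
    rcases lt_trichotomy (q - p) (1 - p - q) with h | h | h
    · exact Or.inl h
    · exact absurd (by linarith) hq
    · exact Or.inr h
  rcases htri with hm | hm
  · rw [min_eq_left (le_of_lt hm), show p + (q - p) = q by ring,
      show 1 - p - (q - p) = 1 - q by ring]
    funext x; simp only [c2]
    split_ifs <;> first | omega | (exfalso; linarith)
  · rw [min_eq_right (le_of_lt hm), show p + (1 - p - q) = 1 - q by ring,
      show 1 - p - (1 - p - q) = q by ring]
    funext x; simp only [c2]
    split_ifs <;> first | omega | (exfalso; linarith)

lemma LIII (p q : ℝ) (hp0 : 0 < p) (hp : p < 1/2) (hq1 : 1 - p < q) (hq2 : q < 1)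
    (hne : q ≠ 1 - p/2) :
    topple q (c2 p (1 - p)) = c3 p q (2 - p - q) := by
  rw [topple_eq (c2 p (1-p)) q (1-p) 1
    (by rw [one_le_c2]; push_neg; constructor <;> intro h <;> linarith)
    (isg _ _ (1-p) (one_le_c2.mpr (Or.inr rfl)) hq1 (by linarith)
      (by intro y hy; rcases one_le_c2.mp hy with rfl | rfl <;> intro h <;> linarith))
    (isl1 _ _ (by intro y hy; rcases one_le_c2.mp hy with rfl | rfl <;> intro h <;> linarith))]
  have ha : ∀ x : ℝ, (x = 1 - p ∧ (0:ℝ) < 1 - p) = (x = 1 - p) := by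
    intro x; simp only [eq_iff_iff, and_iff_left_iff_imp]; intro; linarith
  have hb : ∀ x : ℝ, (x = 1 ∧ (1:ℝ) < 1) = False := by intro x; simp
  simp only [ha, hb, if_false]
  have htri : q - (1 - p) < 1 - q ∨ 1 - q < q - (1 - p) := by
    rcases lt_trichotomy (q - (1 - p)) (1 - q) with h | h | h
    · exact Or.inl h
    · exact absurd (by linarith) hne
    · exact Or.inr h
  rcases htri with hm | hm
  · rw [min_eq_left (le_of_lt hm), show 1 - p + (q - (1 - p)) = q by ring,
      show 1 - (q - (1 - p)) = 2 - p - q by ring]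
    funext x; simp only [c2, c3]
    split_ifs <;> first | omega | (exfalso; linarith)
  · rw [min_eq_right (le_of_lt hm), show 1 - p + (1 - q) = 2 - p - q by ring,
      show 1 - (1 - q) = q by ring]
    funext x; simp only [c2, c3]
    split_ifs <;> first | omega | (exfalso; linarith)

lemma LIIA (p q : ℝ) (hq : 1/2 < q) (hp0 : 0 < p) (hp1 : p < 1 - q) (hne : q ≠ 1 - 2*p) :
    topple p (c2 q (1 - q)) = c3 p (1 - q - p) q := by
  rw [topple_eq (c2 q (1-q)) p 0 (1-q)
    (by rw [one_le_c2]; push_neg; constructor <;> intro h <;> linarith)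
    (isg0 _ _ (by intro y hy; rcases one_le_c2.mp hy with rfl | rfl <;> intro h <;> linarith))
    (isl _ _ (1-q) (one_le_c2.mpr (Or.inr rfl)) hp1 (by linarith)
      (by intro y hy; rcases one_le_c2.mp hy with rfl | rfl <;> intro h <;> linarith))]
  have ha : ∀ x : ℝ, (x = 0 ∧ (0:ℝ) < 0) = False := by intro x; simp
  have hb : ∀ x : ℝ, (x = 1 - q ∧ 1 - q < 1) = (x = 1 - q) := by
    intro x; simp only [eq_iff_iff, and_iff_left_iff_imp]; intro; linarith
  simp only [ha, hb, if_false, zero_add, sub_zero]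
  have htri : p < 1 - q - p ∨ 1 - q - p < p := by
    rcases lt_trichotomy p (1 - q - p) with h | h | h
    · exact Or.inl h
    · exact absurd (by linarith) hne
    · exact Or.inr h
  rcases htri with hm | hm
  · rw [min_eq_left (le_of_lt hm)]
    funext x; simp only [c2, c3]
    split_ifs <;> first | omega | (exfalso; linarith)
  · rw [min_eq_right (le_of_lt hm), show 1 - q - (1 - q - p) = p by ring]
    funext x; simp only [c2, c3]
    split_ifs <;> first | omega | (exfalso; linarith)

lemma LIIB (p q : ℝ) (hp0 : 0 < p) (hpq : p < q) (hq : q < 1/2) (hne : q ≠ 2*p) :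
    topple p (c2 q (1 - q)) = c3 p (q - p) (1 - q) := by
  rw [topple_eq (c2 q (1-q)) p 0 q
    (by rw [one_le_c2]; push_neg; constructor <;> intro h <;> linarith)
    (isg0 _ _ (by intro y hy; rcases one_le_c2.mp hy with rfl | rfl <;> intro h <;> linarith))
    (isl _ _ q (one_le_c2.mpr (Or.inl rfl)) hpq (by linarith)
      (by intro y hy; rcases one_le_c2.mp hy with rfl | rfl <;> intro h <;> linarith))]
  have ha : ∀ x : ℝ, (x = 0 ∧ (0:ℝ) < 0) = False := by intro x; simp
  have hb : ∀ x : ℝ, (x = q ∧ q < 1) = (x = q) := by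
    intro x; simp only [eq_iff_iff, and_iff_left_iff_imp]; intro; linarith
  simp only [ha, hb, if_false, zero_add, sub_zero]
  have htri : p < q - p ∨ q - p < p := by
    rcases lt_trichotomy p (q - p) with h | h | h
    · exact Or.inl h
    · exact absurd (by linarith) hne
    · exact Or.inr h
  rcases htri with hm | hm
  · rw [min_eq_left (le_of_lt hm)]
    funext x; simp only [c2, c3]
    split_ifs <;> first | omega | (exfalso; linarith)
  · rw [min_eq_right (le_of_lt hm), show q - (q - p) = p by ring]
    funext x; simp only [c2, c3]
    split_ifs <;> first | omega | (exfalso; linarith)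

end SandAux
namespace SandAux

-- round 2, branch I.1 : q < p/2
lemma LI1 (p q : ℝ) (hq0 : 0 < q) (hq : q < p/2) (hp : p < 1/2) (hne : q ≠ 1 - 2*p) :
    topple p (c3 q (p - q) (1 - p)) = c3 q p (1 - p - q) := by
  rw [topple_eq (c3 q (p-q) (1-p)) p (p - q) (1 - p)
    (by rw [one_le_c3]; push_neg; refine ⟨by intro h; linarith, by intro h; linarith, by intro h; linarith⟩)
    (isg _ _ (p - q) (one_le_c3.mpr (Or.inr (Or.inl rfl))) (by linarith) (by linarith)
      (by intro y hy; rcases one_le_c3.mp hy with rfl | rfl | rfl <;> intro h <;> linarith))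
    (isl _ _ (1 - p) (one_le_c3.mpr (Or.inr (Or.inr rfl))) (by linarith) (by linarith)
      (by intro y hy; rcases one_le_c3.mp hy with rfl | rfl | rfl <;> intro h <;> linarith))]
  have ha : ∀ x : ℝ, (x = p - q ∧ (0:ℝ) < p - q) = (x = p - q) := by
    intro x; simp only [eq_iff_iff, and_iff_left_iff_imp]; intro; linarith
  have hb : ∀ x : ℝ, (x = 1 - p ∧ 1 - p < 1) = (x = 1 - p) := by
    intro x; simp only [eq_iff_iff, and_iff_left_iff_imp]; intro; linarith
  rw [show p - (p - q) = q by ring, show 1 - p - p = 1 - 2*p by ring]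
  simp only [ha, hb]
  have htri : q < 1 - 2*p ∨ 1 - 2*p < q := by
    rcases lt_trichotomy q (1 - 2*p) with h | h | h
    · exact Or.inl h
    · exact absurd h hne
    · exact Or.inr h
  rcases htri with hm | hm
  · rw [min_eq_left (le_of_lt hm), show p - q + q = p by ring,
      show 1 - p - q = 1 - p - q by ring]
    funext x; simp only [c3]
    split_ifs <;> first | omega | (exfalso; linarith)
  · rw [min_eq_right (le_of_lt hm), show p - q + (1 - 2*p) = 1 - p - q by ring,
      show 1 - p - (1 - 2*p) = p by ring]
    funext x; simp only [c3]
    split_ifs <;> first | omega | (exfalso; linarith)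

-- round 2, branch I.2.ii : p/2 < q < 3p-1
lemma LI2iiA (p q : ℝ) (hq1 : p/2 < q) (hq2 : q < 3*p - 1) (hp : p < 1/2) (hqp : q < p) :
    topple p (c3 q (p - q) (1 - p)) = c3 (p - q) (q + 1 - 2*p) p := by
  have hq0 : 0 < q := by linarith
  rw [topple_eq (c3 q (p-q) (1-p)) p q (1 - p)
    (by rw [one_le_c3]; push_neg; refine ⟨by intro h; linarith, by intro h; linarith, by intro h; linarith⟩)
    (isg _ _ q (one_le_c3.mpr (Or.inl rfl)) hqp (by linarith)
      (by intro y hy; rcases one_le_c3.mp hy with rfl | rfl | rfl <;> intro h <;> linarith))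
    (isl _ _ (1 - p) (one_le_c3.mpr (Or.inr (Or.inr rfl))) (by linarith) (by linarith)
      (by intro y hy; rcases one_le_c3.mp hy with rfl | rfl | rfl <;> intro h <;> linarith))]
  have ha : ∀ x : ℝ, (x = q ∧ (0:ℝ) < q) = (x = q) := by
    intro x; simp only [eq_iff_iff, and_iff_left_iff_imp]; intro; linarith
  have hb : ∀ x : ℝ, (x = 1 - p ∧ 1 - p < 1) = (x = 1 - p) := by
    intro x; simp only [eq_iff_iff, and_iff_left_iff_imp]; intro; linarith
  rw [show 1 - p - p = 1 - 2*p by ring]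
  simp only [ha, hb]
  rw [min_eq_right (by linarith : (1 - 2*p) ≤ p - q),
    show q + (1 - 2*p) = q + 1 - 2*p by ring, show 1 - p - (1 - 2*p) = p by ring]
  funext x; simp only [c3]
  split_ifs <;> first | omega | (exfalso; linarith)

lemma LI2iiB (p q : ℝ) (hq1 : p/2 < q) (hq2 : q < 3*p - 1) (hp : p < 1/2) (hqp : q < p)
    (hne1 : 2*q ≠ 1 - p) (hne2 : q ≠ 1 - 2*p) :
    topple q (c3 (p - q) (q + 1 - 2*p) p) = c3 q (1 - p - q) p := by
  have hq0 : 0 < q := by linarith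
  rw [topple_eq (c3 (p-q) (q+1-2*p) p) q (p - q) (q + 1 - 2*p)
    (by rw [one_le_c3]; push_neg; refine ⟨by intro h; linarith, by intro h; linarith, by intro h; linarith⟩)
    (isg _ _ (p - q) (one_le_c3.mpr (Or.inl rfl)) (by linarith) (by linarith)
      (by intro y hy; rcases one_le_c3.mp hy with rfl | rfl | rfl <;> intro h <;> linarith))
    (isl _ _ (q + 1 - 2*p) (one_le_c3.mpr (Or.inr (Or.inl rfl))) (by linarith) (by linarith)
      (by intro y hy; rcases one_le_c3.mp hy with rfl | rfl | rfl <;> intro h <;> linarith))]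
  have ha : ∀ x : ℝ, (x = p - q ∧ (0:ℝ) < p - q) = (x = p - q) := by
    intro x; simp only [eq_iff_iff, and_iff_left_iff_imp]; intro; linarith
  have hb : ∀ x : ℝ, (x = q + 1 - 2*p ∧ q + 1 - 2*p < 1) = (x = q + 1 - 2*p) := by
    intro x; simp only [eq_iff_iff, and_iff_left_iff_imp]; intro; linarith
  rw [show q - (p - q) = 2*q - p by ring, show q + 1 - 2*p - q = 1 - 2*p by ring]
  simp only [ha, hb]
  have htri : 2*q - p < 1 - 2*p ∨ 1 - 2*p < 2*q - p := by
    rcases lt_trichotomy (2*q - p) (1 - 2*p) with h | h | h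
    · exact Or.inl h
    · exact absurd (by linarith) hne1
    · exact Or.inr h
  rcases htri with hm | hm
  · rw [min_eq_left (le_of_lt hm), show p - q + (2*q - p) = q by ring,
      show q + 1 - 2*p - (2*q - p) = 1 - p - q by ring]
    funext x; simp only [c3]
    split_ifs <;> first | omega | (exfalso; linarith)
  · rw [min_eq_right (le_of_lt hm), show p - q + (1 - 2*p) = 1 - p - q by ring,
      show q + 1 - 2*p - (1 - 2*p) = q by ring]
    funext x; simp only [c3]
    split_ifs <;> first | omega | (exfalso; linarith)

-- round 2, branch I.2.i : p/2 < q < p, 3p-1 < q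
lemma LI2iA (p q : ℝ) (hq1 : p/2 < q) (hqp : q < p) (hp : p < 1/2) (h3 : 3*p - 1 < q) :
    topple p (c3 q (p - q) (1 - p)) = c3 (p - q) p (1 - 2*p + q) := by
  have hq0 : 0 < q := by linarith
  rw [topple_eq (c3 q (p-q) (1-p)) p q (1 - p)
    (by rw [one_le_c3]; push_neg; refine ⟨by intro h; linarith, by intro h; linarith, by intro h; linarith⟩)
    (isg _ _ q (one_le_c3.mpr (Or.inl rfl)) hqp (by linarith)
      (by intro y hy; rcases one_le_c3.mp hy with rfl | rfl | rfl <;> intro h <;> linarith))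
    (isl _ _ (1 - p) (one_le_c3.mpr (Or.inr (Or.inr rfl))) (by linarith) (by linarith)
      (by intro y hy; rcases one_le_c3.mp hy with rfl | rfl | rfl <;> intro h <;> linarith))]
  have ha : ∀ x : ℝ, (x = q ∧ (0:ℝ) < q) = (x = q) := by
    intro x; simp only [eq_iff_iff, and_iff_left_iff_imp]; intro; linarith
  have hb : ∀ x : ℝ, (x = 1 - p ∧ 1 - p < 1) = (x = 1 - p) := by
    intro x; simp only [eq_iff_iff, and_iff_left_iff_imp]; intro; linarith
  rw [show 1 - p - p = 1 - 2*p by ring]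
  simp only [ha, hb]
  rw [min_eq_left (by linarith : p - q ≤ 1 - 2*p),
    show q + (p - q) = p by ring, show 1 - p - (p - q) = 1 - 2*p + q by ring]
  funext x; simp only [c3]
  split_ifs <;> first | omega | (exfalso; linarith)

lemma LI2iB (p q : ℝ) (hq1 : p/2 < q) (hqp : q < p) (hp : p < 1/2) (h3 : 3*p - 1 < q) :
    topple q (c3 (p - q) p (1 - 2*p + q)) p = 0 := by
  have hq0 : 0 < q := by linarith
  rw [topple_eq (c3 (p-q) p (1-2*p+q)) q (p - q) p
    (by rw [one_le_c3]; push_neg; refine ⟨by intro h; linarith, by intro h; linarith, by intro h; linarith⟩)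
    (isg _ _ (p - q) (one_le_c3.mpr (Or.inl rfl)) (by linarith) (by linarith)
      (by intro y hy; rcases one_le_c3.mp hy with rfl | rfl | rfl <;> intro h <;> linarith))
    (isl _ _ p (one_le_c3.mpr (Or.inr (Or.inl rfl))) hqp (by linarith)
      (by intro y hy; rcases one_le_c3.mp hy with rfl | rfl | rfl <;> intro h <;> linarith))]
  have ha : ∀ x : ℝ, (x = p - q ∧ (0:ℝ) < p - q) = (x = p - q) := by
    intro x; simp only [eq_iff_iff, and_iff_left_iff_imp]; intro; linarith
  have hb : ∀ x : ℝ, (x = p ∧ p < 1) = (x = p) := by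
    intro x; simp only [eq_iff_iff, and_iff_left_iff_imp]; intro; linarith
  simp only [ha, hb]
  rw [show q - (p - q) = 2*q - p by ring]
  have hc1 : 0 < min (2*q - p) (p - q) := lt_min (by linarith) (by linarith)
  have hc2 : min (2*q - p) (p - q) ≤ 2*q - p := min_le_left _ _
  simp only [c3, eq_self_iff_true, true_and, if_true]
  split_ifs <;> first | omega | (exfalso; linarith) | simp_all

-- round 2, branch II.B.1 : 2p < q < 1/2
lemma LIIB1 (p q : ℝ) (hp0 : 0 < p) (h2 : 2*p < q) (hq : q < 1/2)
    (hne1 : 2*q ≠ 1 - p) (hne2 : q ≠ 1 - 2*p) :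
    topple q (c3 p (q - p) (1 - q)) = c3 p q (1 - q - p) := by
  rw [topple_eq (c3 p (q-p) (1-q)) q (q - p) (1 - q)
    (by rw [one_le_c3]; push_neg; refine ⟨by intro h; linarith, by intro h; linarith, by intro h; linarith⟩)
    (isg _ _ (q - p) (one_le_c3.mpr (Or.inr (Or.inl rfl))) (by linarith) (by linarith)
      (by intro y hy; rcases one_le_c3.mp hy with rfl | rfl | rfl <;> intro h <;> linarith))
    (isl _ _ (1 - q) (one_le_c3.mpr (Or.inr (Or.inr rfl))) (by linarith) (by linarith)
      (by intro y hy; rcases one_le_c3.mp hy with rfl | rfl | rfl <;> intro h <;> linarith))]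
  have ha : ∀ x : ℝ, (x = q - p ∧ (0:ℝ) < q - p) = (x = q - p) := by
    intro x; simp only [eq_iff_iff, and_iff_left_iff_imp]; intro; linarith
  have hb : ∀ x : ℝ, (x = 1 - q ∧ 1 - q < 1) = (x = 1 - q) := by
    intro x; simp only [eq_iff_iff, and_iff_left_iff_imp]; intro; linarith
  rw [show q - (q - p) = p by ring, show 1 - q - q = 1 - 2*q by ring]
  simp only [ha, hb]
  have htri : p < 1 - 2*q ∨ 1 - 2*q < p := by
    rcases lt_trichotomy p (1 - 2*q) with h | h | h
    · exact Or.inl h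
    · exact absurd (by linarith) hne1
    · exact Or.inr h
  rcases htri with hm | hm
  · rw [min_eq_left (le_of_lt hm), show q - p + p = q by ring]
    funext x; simp only [c3]
    split_ifs <;> first | omega | (exfalso; linarith)
  · rw [min_eq_right (le_of_lt hm), show q - p + (1 - 2*q) = 1 - q - p by ring,
      show 1 - q - (1 - 2*q) = q by ring]
    funext x; simp only [c3]
    split_ifs <;> first | omega | (exfalso; linarith)

-- round 2, branch II.B.2 : p < q < 2p, q < 1/2
lemma LIIB2 (p q : ℝ) (hp0 : 0 < p) (hpq : p < q) (h2 : q < 2*p) (hq : q < 1/2) :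
    topple q (c3 p (q - p) (1 - q)) p = 0 := by
  rw [topple_eq (c3 p (q-p) (1-q)) q p (1 - q)
    (by rw [one_le_c3]; push_neg; refine ⟨by intro h; linarith, by intro h; linarith, by intro h; linarith⟩)
    (isg _ _ p (one_le_c3.mpr (Or.inl rfl)) hpq (by linarith)
      (by intro y hy; rcases one_le_c3.mp hy with rfl | rfl | rfl <;> intro h <;> linarith))
    (isl _ _ (1 - q) (one_le_c3.mpr (Or.inr (Or.inr rfl))) (by linarith) (by linarith)
      (by intro y hy; rcases one_le_c3.mp hy with rfl | rfl | rfl <;> intro h <;> linarith))]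
  have ha : ∀ x : ℝ, (x = p ∧ (0:ℝ) < p) = (x = p) := by
    intro x; simp only [eq_iff_iff, and_iff_left_iff_imp]; intro; linarith
  have hb : ∀ x : ℝ, (x = 1 - q ∧ 1 - q < 1) = (x = 1 - q) := by
    intro x; simp only [eq_iff_iff, and_iff_left_iff_imp]; intro; linarith
  simp only [ha, hb]
  rw [show 1 - q - q = 1 - 2*q by ring]
  have hc1 : 0 < min (q - p) (1 - 2*q) := lt_min (by linarith) (by linarith)
  have hc2 : min (q - p) (1 - 2*q) ≤ 1 - 2*q := min_le_right _ _
  simp only [c3, eq_self_iff_true, true_and, if_true]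
  split_ifs <;> first | omega | (exfalso; linarith) | simp_all

end SandAux
namespace SandAux

lemma c2_eval_ne (a b x : ℝ) (h1 : x ≠ a) (h2 : x ≠ b) : c2 a b x = 0 := by
  simp [c2, h1, h2]

lemma c3_eval_ne (a b c x : ℝ) (h1 : x ≠ a) (h2 : x ≠ b) (h3 : x ≠ c) : c3 a b c x = 0 := by
  simp [c3, h1, h2, h3]

lemma main_left (p q : ℝ) (hp0 : 0 < p) (hp : p < 1/2) (hq0 : 0 < q) (hq1 : q < 1)
    (hZ1 : q ≠ p) (hZ2 : q ≠ 1 - p) (hZ3 : q ≠ 1/2) (hZ4 : q ≠ p/2) (hZ5 : q ≠ 2*p)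
    (hZ6 : q ≠ 3*p - 1) (hZ7 : q ≠ 1 - 2*p) (hZ8 : 2*q ≠ 1 - p) (hZ9 : q ≠ 1 - p/2) :
    relaxLength [p, q] = 2 ↔
      ((1/2 < q ∧ q < 1 - p) ∨ (2*p < q ∧ q < 1/2) ∨ (0 < q ∧ q < p/2)
        ∨ (p/2 < q ∧ q < 3*p - 1)) := by
  have e0 : topple p (fun _ => 0) = c2 p (1 - p) := L0 p hp0 hp
  rcases lt_or_gt_of_ne hZ1 with hqp | hpq
  · -- q < p
    have e1 : topple q (c2 p (1 - p)) = c3 q (p - q) (1 - p) := LI p q hq0 hqp hp hZ4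
    have hP1 : ¬ IsMinimalConfig {y | y ∈ [p, q]} (topple q (topple p (fun _ => 0))) := by
      rw [e0, e1]
      exact not_minimal_of_zero _ p q (c3_eval_ne _ _ _ _
        (by intro h; exact hZ1 h.symm) (by intro h; linarith) (by intro h; linarith))
    rcases lt_or_gt_of_ne hZ4 with h4 | h4
    · -- q < p/2 : L = 2
      have e2 : topple p (c3 q (p - q) (1 - p)) = c3 q p (1 - p - q) := LI1 p q hq0 h4 hp hZ7
      have hL : relaxLength [p, q] = 2 := by
        apply rl_eq_two p q hP1
        rw [e0, e1, e2, topple_mem q _ (one_le_c3.mpr (Or.inl rfl))]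
        exact isMinimalConfig_c3 q p (1 - p - q) p q
          (by constructor <;> linarith) (by constructor <;> linarith)
          (by constructor <;> linarith)
          (by intro h; linarith) (by intro h; linarith) (by intro h; apply hZ7; linarith)
          ⟨1, by push_cast; ring⟩ (Or.inr (Or.inl rfl)) (Or.inl rfl)
          (fun h => hZ1 h.symm) (by intro h; linarith)
      exact iff_of_true hL (Or.inr (Or.inr (Or.inl ⟨hq0, h4⟩)))
    · -- p/2 < q < p
      rcases lt_or_gt_of_ne hZ6 with h6 | h6
      · -- q < 3p - 1 : L = 2
        have e2 := LI2iiA p q h4 h6 hp hqp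
        have e3 := LI2iiB p q h4 h6 hp hqp hZ8 hZ7
        have hL : relaxLength [p, q] = 2 := by
          apply rl_eq_two p q hP1
          rw [e0, e1, e2, e3]
          exact isMinimalConfig_c3 q (1 - p - q) p p q
            (by constructor <;> linarith) (by constructor <;> linarith)
            (by constructor <;> linarith)
            (by intro h; apply hZ8; linarith) (fun h => hZ1 h)
            (by intro h; apply hZ7; linarith)
            ⟨1, by push_cast; ring⟩ (Or.inr (Or.inr rfl)) (Or.inl rfl)
            (fun h => hZ1 h.symm) (by intro h; linarith)
        exact iff_of_true hL (Or.inr (Or.inr (Or.inr ⟨h4, h6⟩)))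
      · -- 3p - 1 < q < p : L ≥ 3
        have e2 := LI2iA p q h4 hqp hp h6
        have hL : relaxLength [p, q] ≠ 2 := by
          apply rl_ne_two_big p q hP1
          rw [e0, e1, e2]
          exact not_minimal_of_zero _ p q (LI2iB p q h4 hqp hp h6)
        refine iff_of_false hL ?_
        rintro (⟨h1, h2⟩ | ⟨h1, h2⟩ | ⟨h1, h2⟩ | ⟨h1, h2⟩) <;> linarith
  · -- p < q
    rcases lt_or_gt_of_ne hZ2 with h2' | h2'
    · -- q < 1 - p
      have e1 : topple q (c2 p (1 - p)) = c2 q (1 - q) := LII p q hp0 hpq h2' hZ3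
      have hP1 : ¬ IsMinimalConfig {y | y ∈ [p, q]} (topple q (topple p (fun _ => 0))) := by
        rw [e0, e1]
        exact not_minimal_of_zero _ p q (c2_eval_ne _ _ _
          (by intro h; exact hZ1 h.symm) (by intro h; linarith))
      rcases lt_or_gt_of_ne hZ3 with h3 | h3
      · -- p < q < 1/2
        have e2 := LIIB p q hp0 hpq h3 hZ5
        rcases lt_or_gt_of_ne hZ5 with h5 | h5
        · -- q < 2p : L ≥ 3
          have hL : relaxLength [p, q] ≠ 2 := by
            apply rl_ne_two_big p q hP1
            rw [e0, e1, e2]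
            exact not_minimal_of_zero _ p q (LIIB2 p q hp0 hpq h5 h3)
          refine iff_of_false hL ?_
          rintro (⟨h1, h2⟩ | ⟨h1, h2⟩ | ⟨h1, h2⟩ | ⟨h1, h2⟩) <;> linarith
        · -- 2p < q < 1/2 : L = 2
          have e3 := LIIB1 p q hp0 h5 h3 hZ8 hZ7
          have hL : relaxLength [p, q] = 2 := by
            apply rl_eq_two p q hP1
            rw [e0, e1, e2, e3]
            exact isMinimalConfig_c3 p q (1 - q - p) p q
              (by constructor <;> linarith) (by constructor <;> linarith)
              (by constructor <;> linarith)
              hZ1.symm (by intro h; apply hZ7; linarith) (by intro h; apply hZ8; linarith)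
              ⟨1, by push_cast; ring⟩ (Or.inl rfl) (Or.inr (Or.inl rfl))
              (fun h => hZ1 h.symm) (by intro h; linarith)
          exact iff_of_true hL (Or.inr (Or.inl ⟨h5, h3⟩))
      · -- 1/2 < q < 1 - p : L = 2
        have e2 := LIIA p q h3 hp0 (by linarith) hZ7
        have hL : relaxLength [p, q] = 2 := by
          apply rl_eq_two p q hP1
          rw [e0, e1, e2, topple_mem q _ (one_le_c3.mpr (Or.inr (Or.inr rfl)))]
          exact isMinimalConfig_c3 p (1 - q - p) q p q
            (by constructor <;> linarith) (by constructor <;> linarith)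
            (by constructor <;> linarith)
            (by intro h; apply hZ7; linarith) hZ1.symm (by intro h; linarith)
            ⟨1, by push_cast; ring⟩ (Or.inl rfl) (Or.inr (Or.inr rfl))
            (fun h => hZ1 h.symm) (by intro h; linarith)
        exact iff_of_true hL (Or.inl ⟨h3, h2'⟩)
    · -- q > 1 - p : L = 1
      have e1 := LIII p q hp0 hp h2' hq1 hZ9
      have hL : relaxLength [p, q] ≠ 2 := by
        apply rl_ne_two_one p q
        rw [e0, e1]
        exact isMinimalConfig_c3 p q (2 - p - q) p q
          (by constructor <;> linarith) (by constructor <;> linarith)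
          (by constructor <;> linarith)
          hZ1.symm (by intro h; linarith) (by intro h; apply hZ9; linarith)
          ⟨2, by push_cast; ring⟩ (Or.inl rfl) (Or.inr (Or.inl rfl))
          (fun h => hZ1 h.symm) (by intro h; linarith)
      refine iff_of_false hL ?_
      rintro (⟨h1, h2⟩ | ⟨h1, h2⟩ | ⟨h1, h2⟩ | ⟨h1, h2⟩) <;> linarith

end SandAux
namespace SandAux

/-- reflection of a configuration -/
def rfl1 (μ : ℝ → ℕ) : ℝ → ℕ := fun x => μ (1 - x)

lemma rfl1_rfl1 (μ : ℝ → ℕ) : rfl1 (rfl1 μ) = μ := by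
  funext x; simp [rfl1]

lemma isLUB_image_sub {S : Set ℝ} {a : ℝ} (h : IsGLB S a) :
    IsLUB ((fun x => 1 - x) '' S) (1 - a) := by
  constructor
  · rintro y ⟨z, hz, rfl⟩
    have := h.1 hz
    simp only []
    linarith
  · intro b hb
    have : a ≥ 1 - b := by
      apply h.2
      intro z hz
      have := hb ⟨z, hz, rfl⟩
      simp only [] at this
      linarith
    linarith

lemma isGLB_image_sub {S : Set ℝ} {a : ℝ} (h : IsLUB S a) :
    IsGLB ((fun x => 1 - x) '' S) (1 - a) := by
  constructor
  · rintro y ⟨z, hz, rfl⟩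
    have := h.1 hz
    simp only []
    linarith
  · intro b hb
    have : a ≤ 1 - b := by
      apply h.2
      intro z hz
      have := hb ⟨z, hz, rfl⟩
      simp only [] at this
      linarith
    linarith

lemma topple_rfl1 (p : ℝ) (μ : ℝ → ℕ) :
    topple p (rfl1 μ) = rfl1 (topple (1 - p) μ) := by
  by_cases h : 1 ≤ μ (1 - p)
  · rw [topple_mem _ _ (show 1 ≤ rfl1 μ p from h), topple_mem _ _ h]
  · have hS : ({0} ∪ {h | 1 ≤ rfl1 μ h ∧ h < p} : Set ℝ)
        = (fun x => 1 - x) '' ({1} ∪ {h | 1 ≤ μ h ∧ 1 - p < h}) := by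
      ext y
      constructor
      · rintro (rfl | ⟨hy1, hy2⟩)
        · exact ⟨1, Or.inl rfl, by norm_num⟩
        · exact ⟨1 - y, Or.inr ⟨hy1, by linarith⟩, by ring⟩
      · rintro ⟨z, (rfl | ⟨hz1, hz2⟩), rfl⟩
        · left; norm_num
        · right
          refine ⟨by simpa [rfl1] using hz1, ?_⟩
          show 1 - z < p
          linarith
    have hT : ({1} ∪ {h | 1 ≤ rfl1 μ h ∧ p < h} : Set ℝ)
        = (fun x => 1 - x) '' ({0} ∪ {h | 1 ≤ μ h ∧ h < 1 - p}) := by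
      ext y
      constructor
      · rintro (rfl | ⟨hy1, hy2⟩)
        · exact ⟨0, Or.inl rfl, by norm_num⟩
        · exact ⟨1 - y, Or.inr ⟨hy1, by linarith⟩, by ring⟩
      · rintro ⟨z, (rfl | ⟨hz1, hz2⟩), rfl⟩
        · left; norm_num
        · right
          refine ⟨by simpa [rfl1] using hz1, ?_⟩
          show p < 1 - z
          linarith
    -- sInf / sSup for the reflected operator
    have hBglb : IsGLB ({1} ∪ {h | 1 ≤ μ h ∧ 1 - p < h})
        (sInf ({1} ∪ {h | 1 ≤ μ h ∧ 1 - p < h})) :=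
      Real.isGLB_sInf ⟨1, Or.inl rfl⟩
        ⟨min 1 (1 - p), by rintro y (rfl | ⟨_, hy⟩)
                           · exact min_le_left _ _
                           · exact le_trans (min_le_right _ _) (le_of_lt hy)⟩
    have hAlub : IsLUB ({0} ∪ {h | 1 ≤ μ h ∧ h < 1 - p})
        (sSup ({0} ∪ {h | 1 ≤ μ h ∧ h < 1 - p})) :=
      Real.isLUB_sSup ⟨0, Or.inl rfl⟩
        ⟨max 0 (1 - p), by rintro y (rfl | ⟨_, hy⟩)
                           · exact le_max_left _ _
                           · exact le_trans (le_of_lt hy) (le_max_right _ _)⟩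
    have ea : sSup ({0} ∪ {h | 1 ≤ rfl1 μ h ∧ h < p})
        = 1 - sInf ({1} ∪ {h | 1 ≤ μ h ∧ 1 - p < h}) := by
      rw [hS]; exact (isLUB_image_sub hBglb).csSup_eq
        (Set.Nonempty.image _ ⟨1, Or.inl rfl⟩)
    have eb : sInf ({1} ∪ {h | 1 ≤ rfl1 μ h ∧ p < h})
        = 1 - sSup ({0} ∪ {h | 1 ≤ μ h ∧ h < 1 - p}) := by
      rw [hT]; exact (isGLB_image_sub hAlub).csInf_eq
        (Set.Nonempty.image _ ⟨0, Or.inl rfl⟩)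
    have hp' : ¬ 1 ≤ rfl1 μ p := h
    simp only [topple, if_neg hp', if_neg h, ea, eb]
    set A := sSup ({0} ∪ {h | 1 ≤ μ h ∧ h < 1 - p}) with hA
    set B := sInf ({1} ∪ {h | 1 ≤ μ h ∧ 1 - p < h}) with hB
    funext x
    have hc : min (p - (1 - B)) (1 - A - p) = min ((1 - p) - A) (B - (1 - p)) := by
      rw [min_comm]
      congr 1 <;> ring
    rw [hc]
    set c := min ((1 - p) - A) (B - (1 - p)) with hcc
    have e1 : (x = 1 - B + c) = (1 - x = B - c) := by
      simp only [eq_iff_iff]; constructor <;> intro hh <;> linarith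
    have e2 : (x = 1 - A - c) = (1 - x = A + c) := by
      simp only [eq_iff_iff]; constructor <;> intro hh <;> linarith
    have e3 : (x = 1 - B ∧ 0 < 1 - B) = (1 - x = B ∧ B < 1) := by
      simp only [eq_iff_iff]; constructor <;> rintro ⟨hh1, hh2⟩ <;>
        exact ⟨by linarith, by linarith⟩
    have e4 : (x = 1 - A ∧ 1 - A < 1) = (1 - x = A ∧ 0 < A) := by
      simp only [eq_iff_iff]; constructor <;> rintro ⟨hh1, hh2⟩ <;>
        exact ⟨by linarith, by linarith⟩
    simp only [rfl1, e1, e2, e3, e4]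
    omega

lemma relaxRound_rfl1 (p q : ℝ) (μ : ℝ → ℕ) :
    relaxRound [p, q] (rfl1 μ) = rfl1 (relaxRound [1 - p, 1 - q] μ) := by
  rw [relaxRound_pair, relaxRound_pair, topple_rfl1, topple_rfl1]

lemma iterate_rfl1 (p q : ℝ) (N : ℕ) :
    (relaxRound [p, q])^[N] (fun _ => 0)
      = rfl1 ((relaxRound [1 - p, 1 - q])^[N] (fun _ => 0)) := by
  induction N with
  | zero => funext x; simp [rfl1]
  | succ n ih =>
      rw [Function.iterate_succ_apply', Function.iterate_succ_apply', ih, relaxRound_rfl1]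

lemma isConfig_rfl1 (μ : ℝ → ℕ) (h : IsConfig μ) : IsConfig (rfl1 μ) := by
  obtain ⟨hfin, hsub⟩ := h
  constructor
  · apply Set.Finite.subset (hfin.image (fun x => 1 - x))
    intro x hx
    exact ⟨1 - x, by simpa [rfl1] using hx, by ring⟩
  · intro x hx
    have : μ (1 - x) ≠ 0 := hx
    have := hsub this
    simp only [Set.mem_Ioo] at this ⊢
    constructor <;> linarith

noncomputable def reflEquiv : ℝ ≃ ℝ :=
  ⟨fun x => 1 - x, fun x => 1 - x, fun x => by ring, fun x => by ring⟩

lemma totalMass_rfl1 (μ : ℝ → ℕ) : totalMass (rfl1 μ) = totalMass μ := by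
  unfold totalMass rfl1
  exact finsum_comp_equiv reflEquiv

lemma weightedSum_rfl1 (μ : ℝ → ℕ) (hfin : (Function.support μ).Finite) :
    weightedSum (rfl1 μ) = (totalMass μ : ℝ) - weightedSum μ := by
  unfold weightedSum rfl1
  have h1 : ∑ᶠ h : ℝ, (μ (1 - h) : ℝ) * h = ∑ᶠ h : ℝ, (μ h : ℝ) * (1 - h) := by
    have := finsum_comp_equiv reflEquiv (f := fun h : ℝ => (μ h : ℝ) * (1 - h))
    rw [← this]
    apply finsum_congr
    intro x
    simp [reflEquiv]
  rw [h1]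
  have h2 : ∀ h : ℝ, (μ h : ℝ) * (1 - h) = (μ h : ℝ) - (μ h : ℝ) * h := by
    intro h; ring
  rw [finsum_congr h2, finsum_sub_distrib]
  · congr 1
    unfold totalMass
    have hsub : Function.support (fun h : ℝ => (μ h : ℝ)) ⊆ hfin.toFinset := by
      intro x hx; simp only [Function.mem_support, ne_eq, Nat.cast_eq_zero] at hx
      simpa using hx
    have hsub2 : Function.support μ ⊆ hfin.toFinset := by intro x hx; simpa using hx
    rw [finsum_eq_sum_of_support_subset _ hsub, finsum_eq_sum_of_support_subset _ hsub2]
    push_cast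
    rfl
  · apply hfin.subset
    intro x hx
    simp only [Function.mem_support, ne_eq, Nat.cast_eq_zero] at hx
    exact hx
  · apply hfin.subset
    intro x hx
    simp only [Function.mem_support, ne_eq] at hx
    intro h0
    apply hx
    rw [h0]
    simp

lemma admissible_rfl1 (μ : ℝ → ℕ) (h : Admissible μ) : Admissible (rfl1 μ) := by
  obtain ⟨hc, z, hz⟩ := h
  refine ⟨isConfig_rfl1 μ hc, (totalMass μ : ℤ) - z, ?_⟩
  rw [weightedSum_rfl1 μ hc.1, hz]
  push_cast
  ring

lemma isMinimalConfig_rfl1 (p q : ℝ) (μ : ℝ → ℕ)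
    (h : IsMinimalConfig {y | y ∈ [1 - p, 1 - q]} μ) :
    IsMinimalConfig {y | y ∈ [p, q]} (rfl1 μ) := by
  obtain ⟨hadm, hsupp, hmin⟩ := h
  refine ⟨admissible_rfl1 μ hadm, ?_, ?_⟩
  · intro r hr
    rw [mem_pair_set] at hr
    rcases hr with h | h <;> rw [h]
    · exact hsupp (1 - p) (by simp)
    · exact hsupp (1 - q) (by simp)
  · intro ν hν hνsupp
    rw [totalMass_rfl1]
    have := hmin (rfl1 ν) (admissible_rfl1 ν hν) ?_
    · rwa [totalMass_rfl1] at this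
    · intro r hr
      rw [mem_pair_set] at hr
      rcases hr with h | h <;> rw [h]
      · have := hνsupp p (by simp)
        simpa [rfl1] using this
      · have := hνsupp q (by simp)
        simpa [rfl1] using this

lemma isMinimalConfig_rfl1_iff (p q : ℝ) (μ : ℝ → ℕ) :
    IsMinimalConfig {y | y ∈ [p, q]} (rfl1 μ) ↔ IsMinimalConfig {y | y ∈ [1 - p, 1 - q]} μ := by
  constructor
  · intro h
    have h' := isMinimalConfig_rfl1 (1 - p) (1 - q) (rfl1 μ)
    rw [rfl1_rfl1] at h'
    apply h'
    rw [show (1:ℝ) - (1 - p) = p by ring, show (1:ℝ) - (1 - q) = q by ring]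
    exact h
  · exact isMinimalConfig_rfl1 p q μ

lemma relaxLength_refl (p q : ℝ) :
    relaxLength [p, q] = relaxLength [1 - p, 1 - q] := by
  unfold relaxLength
  congr 1
  ext N
  simp only [Set.mem_setOf_eq, and_congr_right_iff]
  intro _
  rw [iterate_rfl1 p q N]
  exact isMinimalConfig_rfl1_iff p q _

end SandAux
namespace SandAux

open scoped ENNReal

def lineG (a b : ℝ) : Set (ℝ×ℝ) := {x | x.2 = a * x.1 + b}

lemma null_lineG (a b : ℝ) : volume (lineG a b) = 0 := by
  have hm : MeasurableSet (lineG a b) :=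
    measurableSet_eq_fun measurable_snd ((measurable_fst.const_mul a).add_const b)
  rw [show (volume : Measure (ℝ×ℝ)) = (volume : Measure ℝ).prod volume from
    Measure.volume_eq_prod ℝ ℝ, Measure.prod_apply hm]
  have h : ∀ x : ℝ, volume (Prod.mk x ⁻¹' lineG a b) = 0 := by
    intro x
    have : Prod.mk x ⁻¹' lineG a b = {a * x + b} := by ext y; simp [lineG]
    rw [this]
    exact measure_singleton _
  simp [h]

lemma null_vert : volume {x : ℝ×ℝ | x.1 = 1/2} = 0 := by
  have : {x : ℝ×ℝ | x.1 = 1/2} = ({1/2} : Set ℝ) ×ˢ (univ : Set ℝ) := by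
    ext ⟨a, b⟩; simp [eq_comm]
  rw [this, show (volume : Measure (ℝ×ℝ)) = (volume : Measure ℝ).prod volume from
    Measure.volume_eq_prod ℝ ℝ, Measure.prod_prod]
  simp

def Zset : Set (ℝ×ℝ) :=
  {x | x.1 = 1/2 ∨ x.2 = 1/2 ∨ x.2 = x.1 ∨ x.2 = 1 - x.1 ∨ x.2 = x.1/2 ∨ x.2 = 2*x.1
    ∨ x.2 = 3*x.1 - 1 ∨ x.2 = 1 - 2*x.1 ∨ x.2 = (1-x.1)/2 ∨ x.2 = 1 - x.1/2
    ∨ x.2 = (1+x.1)/2 ∨ x.2 = 2*x.1 - 1 ∨ x.2 = 2 - 2*x.1}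

lemma null_Zset : volume Zset = 0 := by
  have hsub : Zset ⊆ {x : ℝ×ℝ | x.1 = 1/2} ∪ (lineG 0 (1/2) ∪ (lineG 1 0 ∪ (lineG (-1) 1
      ∪ (lineG (1/2) 0 ∪ (lineG 2 0 ∪ (lineG 3 (-1) ∪ (lineG (-2) 1 ∪ (lineG (-1/2) (1/2)
      ∪ (lineG (-1/2) 1 ∪ (lineG (1/2) (1/2) ∪ (lineG 2 (-1) ∪ lineG (-2) 2))))))))))) := by
    rintro x (h|h|h|h|h|h|h|h|h|h|h|h|h)
    · exact Or.inl h
    · exact Or.inr (Or.inl (by simp only [lineG, Set.mem_setOf_eq]; linarith))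
    · exact Or.inr (Or.inr (Or.inl (by simp only [lineG, Set.mem_setOf_eq]; linarith)))
    · exact Or.inr (Or.inr (Or.inr (Or.inl (by simp only [lineG, Set.mem_setOf_eq]; linarith))))
    · exact Or.inr (Or.inr (Or.inr (Or.inr (Or.inl
        (by simp only [lineG, Set.mem_setOf_eq]; linarith)))))
    · exact Or.inr (Or.inr (Or.inr (Or.inr (Or.inr (Or.inl
        (by simp only [lineG, Set.mem_setOf_eq]; linarith))))))
    · exact Or.inr (Or.inr (Or.inr (Or.inr (Or.inr (Or.inr (Or.inl
        (by simp only [lineG, Set.mem_setOf_eq]; linarith)))))))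
    · exact Or.inr (Or.inr (Or.inr (Or.inr (Or.inr (Or.inr (Or.inr (Or.inl
        (by simp only [lineG, Set.mem_setOf_eq]; linarith))))))))
    · exact Or.inr (Or.inr (Or.inr (Or.inr (Or.inr (Or.inr (Or.inr (Or.inr (Or.inl
        (by simp only [lineG, Set.mem_setOf_eq]; linarith)))))))))
    · exact Or.inr (Or.inr (Or.inr (Or.inr (Or.inr (Or.inr (Or.inr (Or.inr (Or.inr (Or.inl
        (by simp only [lineG, Set.mem_setOf_eq]; linarith))))))))))
    · exact Or.inr (Or.inr (Or.inr (Or.inr (Or.inr (Or.inr (Or.inr (Or.inr (Or.inr (Or.inr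
        (Or.inl (by simp only [lineG, Set.mem_setOf_eq]; linarith)))))))))))
    · exact Or.inr (Or.inr (Or.inr (Or.inr (Or.inr (Or.inr (Or.inr (Or.inr (Or.inr (Or.inr
        (Or.inr (Or.inl (by simp only [lineG, Set.mem_setOf_eq]; linarith))))))))))))
    · exact Or.inr (Or.inr (Or.inr (Or.inr (Or.inr (Or.inr (Or.inr (Or.inr (Or.inr (Or.inr
        (Or.inr (Or.inr (by simp only [lineG, Set.mem_setOf_eq]; linarith))))))))))))
  apply measure_mono_null hsub
  refine measure_union_null null_vert ?_
  refine measure_union_null (null_lineG _ _) ?_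
  refine measure_union_null (null_lineG _ _) ?_
  refine measure_union_null (null_lineG _ _) ?_
  refine measure_union_null (null_lineG _ _) ?_
  refine measure_union_null (null_lineG _ _) ?_
  refine measure_union_null (null_lineG _ _) ?_
  refine measure_union_null (null_lineG _ _) ?_
  refine measure_union_null (null_lineG _ _) ?_
  refine measure_union_null (null_lineG _ _) ?_
  refine measure_union_null (null_lineG _ _) ?_
  exact measure_union_null (null_lineG _ _) (null_lineG _ _)

def R1 : Set (ℝ×ℝ) := regionBetween (fun _ => 1/2) (fun p => 1 - p) (Set.Ioo 0 (1/2))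
def R3 : Set (ℝ×ℝ) := regionBetween (fun p => 2*p) (fun _ => 1/2) (Set.Ioo (0:ℝ) (1/4))
def R5a : Set (ℝ×ℝ) := regionBetween (fun _ => (0:ℝ)) (fun p => p/2) (Set.Ioo (0:ℝ) (1/2))
def R5b : Set (ℝ×ℝ) := regionBetween (fun p => p/2) (fun p => 3*p - 1) (Set.Ioo (2/5 : ℝ) (1/2))
def SL : Set (ℝ×ℝ) := R1 ∪ R3 ∪ R5a ∪ R5b
def mrefl : ℝ×ℝ → ℝ×ℝ := fun x => (1 - x.1, 1 - x.2)
def SS : Set (ℝ×ℝ) := SL ∪ mrefl ⁻¹' SL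

lemma meas_R1 : MeasurableSet R1 :=
  measurableSet_regionBetween measurable_const (by fun_prop) measurableSet_Ioo
lemma meas_R3 : MeasurableSet R3 :=
  measurableSet_regionBetween (by fun_prop) measurable_const measurableSet_Ioo
lemma meas_R5a : MeasurableSet R5a :=
  measurableSet_regionBetween measurable_const (by fun_prop) measurableSet_Ioo
lemma meas_R5b : MeasurableSet R5b :=
  measurableSet_regionBetween (by fun_prop) (by fun_prop) measurableSet_Ioo
lemma meas_SL : MeasurableSet SL :=
  (((meas_R1.union meas_R3).union meas_R5a).union meas_R5b)
lemma meas_mrefl : Measurable mrefl := by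
  unfold mrefl; fun_prop
lemma meas_SS : MeasurableSet SS := meas_SL.union (meas_SL.preimage meas_mrefl)

lemma intOn (f : ℝ → ℝ) (hf : Continuous f) (a b : ℝ) : IntegrableOn f (Set.Ioo a b) volume := by
  rcases le_or_gt a b with h | h
  · exact (integrableOn_Icc_iff_integrableOn_Ioo).mp (hf.continuousOn.integrableOn_Icc)
  · rw [Set.Ioo_eq_empty (by linarith)]
    simp

lemma vol_R1 : volume R1 = ENNReal.ofReal (1/8) := by
  rw [R1, show (volume : Measure (ℝ×ℝ)) = (volume : Measure ℝ).prod volume from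
    Measure.volume_eq_prod ℝ ℝ,
    volume_regionBetween_eq_integral (intOn _ (by continuity) _ _) (intOn _ (by continuity) _ _)
      measurableSet_Ioo (by intro x hx; simp only [Set.mem_Ioo] at hx; linarith)]
  congr 1
  rw [← integral_Ioc_eq_integral_Ioo, ← intervalIntegral.integral_of_le (by norm_num)]
  simp only [Pi.sub_apply]
  rw [show (fun y : ℝ => 1 - y - 1/2) = (fun y : ℝ => 1/2 - y) by funext y; ring]
  rw [intervalIntegral.integral_sub (Continuous.intervalIntegrable (by continuity) _ _)
    (Continuous.intervalIntegrable (by continuity) _ _),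
    intervalIntegral.integral_const, integral_id]
  norm_num

lemma vol_R3 : volume R3 = ENNReal.ofReal (1/16) := by
  rw [R3, show (volume : Measure (ℝ×ℝ)) = (volume : Measure ℝ).prod volume from
    Measure.volume_eq_prod ℝ ℝ,
    volume_regionBetween_eq_integral (intOn _ (by continuity) _ _) (intOn _ (by continuity) _ _)
      measurableSet_Ioo (by intro x hx; simp only [Set.mem_Ioo] at hx; linarith)]
  congr 1
  rw [← integral_Ioc_eq_integral_Ioo, ← intervalIntegral.integral_of_le (by norm_num)]
  simp only [Pi.sub_apply]
  rw [show (fun y : ℝ => 1/2 - 2*y) = (fun y : ℝ => 1/2 - 2*y) from rfl]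
  rw [intervalIntegral.integral_sub (Continuous.intervalIntegrable (by continuity) _ _)
    (Continuous.intervalIntegrable (by continuity) _ _),
    intervalIntegral.integral_const, intervalIntegral.integral_const_mul, integral_id]
  norm_num

lemma vol_R5a : volume R5a = ENNReal.ofReal (1/16) := by
  rw [R5a, show (volume : Measure (ℝ×ℝ)) = (volume : Measure ℝ).prod volume from
    Measure.volume_eq_prod ℝ ℝ,
    volume_regionBetween_eq_integral (intOn _ (by continuity) _ _) (intOn _ (by continuity) _ _)
      measurableSet_Ioo (by intro x hx; simp only [Set.mem_Ioo] at hx; linarith)]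
  congr 1
  rw [← integral_Ioc_eq_integral_Ioo, ← intervalIntegral.integral_of_le (by norm_num)]
  simp only [Pi.sub_apply]
  rw [show (fun y : ℝ => y/2 - 0) = (fun y : ℝ => (1/2) * y) by funext y; ring]
  rw [intervalIntegral.integral_const_mul, integral_id]
  norm_num

lemma vol_R5b : volume R5b = ENNReal.ofReal (1/80) := by
  rw [R5b, show (volume : Measure (ℝ×ℝ)) = (volume : Measure ℝ).prod volume from
    Measure.volume_eq_prod ℝ ℝ,
    volume_regionBetween_eq_integral (intOn _ (by continuity) _ _) (intOn _ (by continuity) _ _)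
      measurableSet_Ioo (by intro x hx; simp only [Set.mem_Ioo] at hx; linarith)]
  congr 1
  rw [← integral_Ioc_eq_integral_Ioo, ← intervalIntegral.integral_of_le (by norm_num)]
  simp only [Pi.sub_apply]
  rw [show (fun y : ℝ => 3*y - 1 - y/2) = (fun y : ℝ => (5/2) * y - 1) by funext y; ring]
  rw [intervalIntegral.integral_sub (Continuous.intervalIntegrable (by continuity) _ _)
    (Continuous.intervalIntegrable (by continuity) _ _),
    intervalIntegral.integral_const, intervalIntegral.integral_const_mul, integral_id]
  norm_num

end SandAux
namespace SandAux

open scoped ENNReal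

lemma SL_bounds (x : ℝ×ℝ) (h : x ∈ SL) :
    0 < x.1 ∧ x.1 < 1/2 ∧ 0 < x.2 ∧ x.2 < 1 := by
  rcases h with ((h | h) | h) | h <;>
    obtain ⟨⟨ha, hb⟩, hc, hd⟩ := h <;>
    dsimp only at hc hd <;>
    refine ⟨by linarith, by linarith, by linarith, by linarith⟩

lemma mem_SL_iff (p q : ℝ) (hp0 : 0 < p) (hp : p < 1/2) :
    (p, q) ∈ SL ↔
      ((1/2 < q ∧ q < 1 - p) ∨ (2*p < q ∧ q < 1/2) ∨ (0 < q ∧ q < p/2)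
        ∨ (p/2 < q ∧ q < 3*p - 1)) := by
  simp only [SL, R1, R3, R5a, R5b, regionBetween, Set.mem_union, Set.mem_setOf_eq, Set.mem_Ioo]
  constructor
  · rintro (((⟨⟨h1, h2⟩, h3, h4⟩ | ⟨⟨h1, h2⟩, h3, h4⟩) | ⟨⟨h1, h2⟩, h3, h4⟩)
      | ⟨⟨h1, h2⟩, h3, h4⟩)
    · exact Or.inl ⟨h3, h4⟩
    · exact Or.inr (Or.inl ⟨h3, h4⟩)
    · exact Or.inr (Or.inr (Or.inl ⟨h3, h4⟩))
    · exact Or.inr (Or.inr (Or.inr ⟨h3, h4⟩))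
  · rintro (⟨h1, h2⟩ | ⟨h1, h2⟩ | ⟨h1, h2⟩ | ⟨h1, h2⟩)
    · exact Or.inl (Or.inl (Or.inl ⟨⟨hp0, hp⟩, h1, h2⟩))
    · exact Or.inl (Or.inl (Or.inr ⟨⟨hp0, by linarith⟩, h1, h2⟩))
    · exact Or.inl (Or.inr ⟨⟨hp0, hp⟩, h1, h2⟩)
    · exact Or.inr ⟨⟨by linarith, hp⟩, h1, h2⟩

lemma vol_SL : volume SL = ENNReal.ofReal (21/80) := by
  have d1 : Disjoint R1 R3 := by
    rw [Set.disjoint_left]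
    rintro x ⟨⟨h1, h2⟩, h3, h4⟩ ⟨⟨h5, h6⟩, h7, h8⟩
    dsimp only at h3 h4 h7 h8
    linarith
  have d2 : Disjoint (R1 ∪ R3) R5a := by
    rw [Set.disjoint_left]
    rintro x (⟨⟨h1, h2⟩, h3, h4⟩ | ⟨⟨h1, h2⟩, h3, h4⟩) ⟨⟨h5, h6⟩, h7, h8⟩ <;>
      dsimp only at h3 h4 h7 h8 <;> linarith
  have d3 : Disjoint (R1 ∪ R3 ∪ R5a) R5b := by
    rw [Set.disjoint_left]
    rintro x ((⟨⟨h1, h2⟩, h3, h4⟩ | ⟨⟨h1, h2⟩, h3, h4⟩) | ⟨⟨h1, h2⟩, h3, h4⟩)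
      ⟨⟨h5, h6⟩, h7, h8⟩ <;> dsimp only at h3 h4 h7 h8 <;> linarith
  rw [SL, measure_union d3 meas_R5b, measure_union d2 meas_R5a, measure_union d1 meas_R3,
    vol_R1, vol_R3, vol_R5a, vol_R5b,
    ← ENNReal.ofReal_add (by norm_num) (by norm_num),
    ← ENNReal.ofReal_add (by norm_num) (by norm_num),
    ← ENNReal.ofReal_add (by norm_num) (by norm_num)]
  norm_num

lemma mp_mrefl : MeasurePreserving mrefl volume volume := by
  have h := (Measure.measurePreserving_sub_left (volume : Measure ℝ) 1).prod
      (Measure.measurePreserving_sub_left (volume : Measure ℝ) 1)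
  rw [show (volume : Measure (ℝ×ℝ)) = (volume : Measure ℝ).prod volume from
    Measure.volume_eq_prod ℝ ℝ]
  exact h

lemma vol_SS : volume SS = 21/40 := by
  have hdisj : Disjoint SL (mrefl ⁻¹' SL) := by
    rw [Set.disjoint_left]
    intro x hx hx'
    have h1 := SL_bounds x hx
    have h2 := SL_bounds (mrefl x) hx'
    simp only [mrefl] at h2
    obtain ⟨-, hb, -, -⟩ := h1
    obtain ⟨-, hb', -, -⟩ := h2
    linarith
  rw [SS, measure_union hdisj (meas_SL.preimage meas_mrefl),
    mp_mrefl.measure_preimage meas_SL.nullMeasurableSet, vol_SL,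
    ← ENNReal.ofReal_add (by norm_num) (by norm_num)]
  rw [show (21:ℝ)/80 + 21/80 = 21/40 by norm_num,
    ENNReal.ofReal_div_of_pos (by norm_num)]
  norm_num

end SandAux
namespace SandAux

lemma Zset_mrefl (x : ℝ×ℝ) (h : mrefl x ∈ Zset) : x ∈ Zset := by
  simp only [Zset, Set.mem_setOf_eq, mrefl] at h ⊢
  rcases h with h|h|h|h|h|h|h|h|h|h|h|h|h
  · exact Or.inl (by linarith)
  · exact Or.inr (Or.inl (by linarith))
  · exact Or.inr (Or.inr (Or.inl (by linarith)))
  · exact Or.inr (Or.inr (Or.inr (Or.inl (by linarith))))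
  · exact Or.inr (Or.inr (Or.inr (Or.inr (Or.inr (Or.inr (Or.inr (Or.inr (Or.inr (Or.inr
      (Or.inl (by linarith)))))))))))
  · exact Or.inr (Or.inr (Or.inr (Or.inr (Or.inr (Or.inr (Or.inr (Or.inr (Or.inr (Or.inr
      (Or.inr (Or.inl (by linarith))))))))))))
  · exact Or.inr (Or.inr (Or.inr (Or.inr (Or.inr (Or.inr (Or.inl (by linarith)))))))
  · exact Or.inr (Or.inr (Or.inr (Or.inr (Or.inr (Or.inr (Or.inr (Or.inr (Or.inr (Or.inr
      (Or.inr (Or.inr (by linarith))))))))))))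
  · exact Or.inr (Or.inr (Or.inr (Or.inr (Or.inr (Or.inr (Or.inr (Or.inr (Or.inr
      (Or.inl (by linarith))))))))))
  · exact Or.inr (Or.inr (Or.inr (Or.inr (Or.inr (Or.inr (Or.inr (Or.inr (Or.inl
      (by linarith)))))))))
  · exact Or.inr (Or.inr (Or.inr (Or.inr (Or.inl (by linarith)))))
  · exact Or.inr (Or.inr (Or.inr (Or.inr (Or.inr (Or.inl (by linarith))))))
  · exact Or.inr (Or.inr (Or.inr (Or.inr (Or.inr (Or.inr (Or.inr (Or.inl (by linarith))))))))

lemma left_iff (p q : ℝ) (hp0 : 0 < p) (hp : p < 1/2) (hq0 : 0 < q) (hq1 : q < 1)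
    (hZ1 : q ≠ p) (hZ2 : q ≠ 1 - p) (hZ3 : q ≠ 1/2) (hZ4 : q ≠ p/2) (hZ5 : q ≠ 2*p)
    (hZ6 : q ≠ 3*p - 1) (hZ7 : q ≠ 1 - 2*p) (hZ8 : 2*q ≠ 1 - p) (hZ9 : q ≠ 1 - p/2) :
    relaxLength [p, q] = 2 ↔ (p, q) ∈ SL :=
  (main_left p q hp0 hp hq0 hq1 hZ1 hZ2 hZ3 hZ4 hZ5 hZ6 hZ7 hZ8 hZ9).trans
    (mem_SL_iff p q hp0 hp).symm

lemma locus_iff (x : ℝ×ℝ) (hx : x ∉ Zset) : x ∈ lengthLocus 2 ↔ x ∈ SS := by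
  obtain ⟨p, q⟩ := x
  simp only [Zset, Set.mem_setOf_eq, not_or] at hx
  obtain ⟨z1, z2, z3, z4, z5, z6, z7, z8, z9, z10, z11, z12, z13⟩ := hx
  simp only [lengthLocus, Set.mem_setOf_eq, Set.mem_Ioo]
  by_cases hsq : 0 < p ∧ p < 1 ∧ 0 < q ∧ q < 1
  · obtain ⟨hp0, hp1, hq0, hq1⟩ := hsq
    rcases lt_or_gt_of_ne z1 with hpl | hpr
    · -- p < 1/2
      have hiff := left_iff p q hp0 hpl hq0 hq1 z3 z4 z2 z5 z6 z7 z8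
        (by intro h; apply z9; linarith) z10
      constructor
      · rintro ⟨-, -, -, hrel⟩
        exact Or.inl (hiff.mp hrel)
      · intro hss
        have hSL : (p, q) ∈ SL := by
          rcases hss with h | h
          · exact h
          · exfalso
            have := SL_bounds _ h
            simp only [mrefl] at this
            linarith [this.2.1]
        exact ⟨⟨hp0, hp1⟩, ⟨hq0, hq1⟩, fun h => z3 h.symm, hiff.mpr hSL⟩
    · -- p > 1/2
      have hiff := left_iff (1 - p) (1 - q) (by linarith) (by linarith) (by linarith)
        (by linarith)
        (by intro h; apply z3; linarith) (by intro h; apply z4; linarith)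
        (by intro h; apply z2; linarith) (by intro h; apply z11; linarith)
        (by intro h; apply z12; linarith) (by intro h; apply z7; linarith)
        (by intro h; apply z13; linarith) (by intro h; apply z10; linarith)
        (by intro h; apply z9; linarith)
      have hrel_eq : relaxLength [p, q] = relaxLength [1 - p, 1 - q] := relaxLength_refl p q
      constructor
      · rintro ⟨-, -, -, hrel⟩
        refine Or.inr ?_
        show mrefl (p, q) ∈ SL
        exact hiff.mp (by rw [← hrel_eq]; exact hrel)
      · intro hss
        have hSL : (1 - p, 1 - q) ∈ SL := by
          rcases hss with h | h
          · exfalso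
            have := SL_bounds _ h
            linarith [this.2.1]
          · exact h
        exact ⟨⟨hp0, hp1⟩, ⟨hq0, hq1⟩, fun h => z3 h.symm,
          by rw [hrel_eq]; exact hiff.mpr hSL⟩
  · refine iff_of_false ?_ ?_
    · rintro ⟨⟨a, b⟩, ⟨c, d⟩, -, -⟩
      exact hsq ⟨a, b, c, d⟩
    · intro hss
      apply hsq
      rcases hss with h | h
      · have := SL_bounds _ h
        exact ⟨this.1, by linarith [this.2.1], this.2.2.1, this.2.2.2⟩
      · have := SL_bounds _ h
        simp only [mrefl] at this
        obtain ⟨a, b, c, d⟩ := this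
        exact ⟨by linarith, by linarith, by linarith, by linarith⟩

end SandAux

/-- The locus `L(p,q) = 2` has Lebesgue measure `21/40`. -/
theorem measure_lengthLocus_two : volume (lengthLocus 2) = 21 / 40 := by
  have hae : lengthLocus 2 =ᵐ[volume] SandAux.SS := by
    rw [MeasureTheory.ae_eq_set]
    constructor
    · apply measure_mono_null ?_ SandAux.null_Zset
      intro x ⟨hxs, hxt⟩
      by_contra hz
      exact hxt ((SandAux.locus_iff x hz).mp hxs)
    · apply measure_mono_null ?_ SandAux.null_Zset
      intro x ⟨hxs, hxt⟩
      by_contra hz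
      exact hxt ((SandAux.locus_iff x hz).mpr hxs)
  rw [measure_congr hae, SandAux.vol_SS]
end
end

section
/- Let p_1, …, p_{n+1} ∈ (0,1) be distinct points, let q_n ∈ [0,1) be the fractional part of −(p_1 + ⋯ + p_n) and q_{n+1} ∈ [0,1) the fractional part of −(p_1 + ⋯ + p_{n+1}), and assume the genericity conditions q_n ∉ {0, p_1, …, p_{n+1}} and q_{n+1} ∉ {0, p_1, …, p_{n+1}}. Let μ_n be the unique admissible configuration of minimal total mass whose support contains {p_1,…,p_n}, let μ_{n+1} be the one for {p_1,…,p_{n+1}}, and let F_{μ_n}, F_{μ_{n+1}} be the associated Ω-tropical polynomials. Then the set I_{n+1} = {x ∈ (0,1) : F_{μ_n}(x) ≠ F_{μ_{n+1}}(x)} equals the open interval (0, q_n) if p_{n+1} < q_n, and equals (q_n, 1) if p_{n+1} > q_n. -/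
open Classical MeasureTheory Function Set

/-- The `Ω`-tropical polynomial associated with an admissible configuration `μ`:
`F_μ(x) = (Σ_h μ(h)(1 − h))·x + Σ_h μ(h)·min(0, h − x)`. -/
noncomputable def assocPoly (μ : ℝ → ℕ) (x : ℝ) : ℝ :=
  (∑ᶠ h, (μ h : ℝ) * (1 - h)) * x + ∑ᶠ h, (μ h : ℝ) * min 0 (h - x)

/-- indicator of a finset -/
noncomputable def ind (T : Finset ℝ) : ℝ → ℕ := fun x => if x ∈ T then 1 else 0

lemma ind_apply_mem {T : Finset ℝ} {x : ℝ} (h : x ∈ T) : ind T x = 1 := if_pos h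
lemma ind_apply_not_mem {T : Finset ℝ} {x : ℝ} (h : x ∉ T) : ind T x = 0 := if_neg h

lemma support_ind (T : Finset ℝ) : support (ind T) = ↑T := by
  ext x; simp [ind, mem_support]

lemma finsum_mul_of_support (μ : ℝ → ℕ) (T : Finset ℝ) (hT : support μ ⊆ ↑T)
    (g : ℝ → ℝ) : ∑ᶠ h, (μ h : ℝ) * g h = ∑ h ∈ T, (μ h : ℝ) * g h := by
  apply finsum_eq_finset_sum_of_support_subset
  intro x hx
  apply hT
  intro h0
  simp [h0] at hx

lemma finsum_ind_mul (T : Finset ℝ) (g : ℝ → ℝ) :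
    ∑ᶠ h, (ind T h : ℝ) * g h = ∑ h ∈ T, g h := by
  rw [finsum_mul_of_support (ind T) T (support_ind T).subset g]
  apply Finset.sum_congr rfl
  intro x hx
  rw [ind_apply_mem hx]; ring

lemma totalMass_ind (T : Finset ℝ) : totalMass (ind T) = T.card := by
  rw [totalMass, finsum_eq_finset_sum_of_support_subset (ind T) (support_ind T).subset]
  rw [Finset.card_eq_sum_ones]
  exact Finset.sum_congr rfl fun x hx => ind_apply_mem hx

lemma weightedSum_ind (T : Finset ℝ) : weightedSum (ind T) = ∑ h ∈ T, h :=
  finsum_ind_mul T id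

lemma assocPoly_ind (T : Finset ℝ) (x : ℝ) :
    assocPoly (ind T) x = ∑ h ∈ T, ((1 - h) * x + min 0 (h - x)) := by
  rw [assocPoly, finsum_ind_mul T (fun h => (1:ℝ) - h), finsum_ind_mul T (fun h => min 0 (h - x)),
    Finset.sum_mul, ← Finset.sum_add_distrib]

/-- key uniqueness lemma -/
lemma minimal_eq (S : Finset ℝ) (hS : ↑S ⊆ Set.Ioo (0:ℝ) 1) (q : ℝ)
    (hq : q = Int.fract (-(∑ h ∈ S, h))) (hq0 : q ≠ 0) (hqS : q ∉ S)
    (μ : ℝ → ℕ) (hμ : IsMinimalConfig ↑S μ) : μ = ind (insert q S) := by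
  obtain ⟨⟨⟨hfin, hsub⟩, z, hz⟩, hge, hmin⟩ := hμ
  have hq01 : q ∈ Set.Ioo (0:ℝ) 1 := by
    constructor
    · rcases lt_or_eq_of_le (Int.fract_nonneg (-(∑ h ∈ S, h))) with h | h
      · rw [hq]; exact h
      · exact absurd (hq.trans h.symm) hq0
    · rw [hq]; exact Int.fract_lt_one _
  -- the candidate ν
  have hνadm : Admissible (ind (insert q S)) := by
    refine ⟨⟨?_, ?_⟩, -⌊-(∑ h ∈ S, h)⌋, ?_⟩
    · rw [support_ind]; exact (insert q S).finite_toSet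
    · rw [support_ind]
      intro x hx
      rcases Finset.mem_insert.mp hx with rfl | hx
      · exact hq01
      · exact hS hx
    · rw [weightedSum_ind, Finset.sum_insert hqS, hq, Int.fract]
      push_cast; ring
  have hνge : ∀ p ∈ (↑S : Set ℝ), 1 ≤ ind (insert q S) p := fun p hp =>
    (ind_apply_mem (Finset.mem_insert_of_mem hp)).ge
  have hle : totalMass μ ≤ S.card + 1 := by
    have := hmin _ hνadm hνge
    rwa [totalMass_ind, Finset.card_insert_of_notMem hqS] at this
  -- T : a finset containing support μ and S
  set T : Finset ℝ := hfin.toFinset ∪ S with hT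
  have hsupT : support μ ⊆ ↑T := by
    intro x hx; simp [hT, hfin.mem_toFinset, hx]
  have hST : S ⊆ T := Finset.subset_union_right
  have hgeS : ∀ x, ind S x ≤ μ x := by
    intro x
    by_cases hx : x ∈ S
    · rw [ind_apply_mem hx]; exact hge x hx
    · rw [ind_apply_not_mem hx]; exact Nat.zero_le _
  have htm : totalMass μ = ∑ h ∈ T, μ h :=
    finsum_eq_finset_sum_of_support_subset μ hsupT
  have hdecomp : ∀ x, μ x = (μ x - ind S x) + ind S x := fun x =>
    (Nat.sub_add_cancel (hgeS x)).symm
  have hsumS : ∑ h ∈ T, ind S h = S.card := by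
    rw [Finset.card_eq_sum_ones]
    rw [show (∑ h ∈ T, ind S h) = ∑ h ∈ T, if h ∈ S then 1 else 0 from rfl]
    rw [Finset.sum_ite_mem, Finset.inter_eq_right.mpr hST]
  have hsplit : totalMass μ = (∑ h ∈ T, (μ h - ind S h)) + S.card := by
    rw [htm, ← hsumS, ← Finset.sum_add_distrib]
    exact Finset.sum_congr rfl fun x _ => hdecomp x
  set G : ℝ → ℕ := fun x => μ x - ind S x with hG
  have hg1 : (∑ h ∈ T, G h) ≤ 1 := by
    have : totalMass μ = (∑ h ∈ T, G h) + S.card := hsplit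
    omega
  -- weighted sum of ν
  obtain ⟨z0, hz0⟩ := hνadm.2
  rw [weightedSum_ind, Finset.sum_insert hqS] at hz0
  have hGval : ∀ x, μ x = ind S x + G x := fun x => by
    simp only [hG]; have := hgeS x; omega
  rcases Nat.le_one_iff_eq_zero_or_eq_one.mp hg1 with h0 | h1
  · -- μ = ind S : contradiction with q ≠ 0
    exfalso
    have hμeq : ∀ x, μ x = ind S x := by
      intro x
      by_cases hx : x ∈ T
      · have := Finset.sum_eq_zero_iff.mp h0 x hx
        have := hGval x
        omega
      · have h1 : μ x = 0 := by
          by_contra hc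
          exact hx (hsupT hc)
        have h2 : ind S x = 0 := ind_apply_not_mem (fun hs => hx (hST hs))
        omega
    have : weightedSum μ = ∑ h ∈ S, h := by
      rw [show μ = ind S from funext hμeq, weightedSum_ind]
    rw [this] at hz
    apply hq0
    rw [hq, hz, ← Int.cast_neg, Int.fract_intCast]
  · -- exactly one extra point h0
    obtain ⟨h0, hh0T, hh0⟩ : ∃ h0 ∈ T, 1 ≤ G h0 := by
      by_contra hc
      push_neg at hc
      have : (∑ h ∈ T, G h) = 0 :=
        Finset.sum_eq_zero fun x hx => by have := hc x hx; omega
      omega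
    have h4 : G h0 + ∑ h ∈ T.erase h0, G h = ∑ h ∈ T, G h :=
      Finset.add_sum_erase T G hh0T
    have hrest : ∀ x ∈ T, x ≠ h0 → G x = 0 := by
      intro x hx hne
      have h5 : ∑ h ∈ T.erase h0, G h = 0 := by omega
      exact Finset.sum_eq_zero_iff.mp h5 x (Finset.mem_erase.mpr ⟨hne, hx⟩)
    have hGh0 : G h0 = 1 := by omega
    have hμeq : ∀ x, μ x = ind (insert q S) x := by
      have hh0supp : h0 ∈ support μ := by
        have := hGval h0
        simp only [mem_support]
        omega
      -- first show h0 = q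
      have hwμ : weightedSum μ = (∑ h ∈ S, h) + h0 := by
        rw [weightedSum, finsum_mul_of_support μ T hsupT]
        have : ∀ x ∈ T, (μ x : ℝ) * x = (ind S x : ℝ) * x + (if x = h0 then x else 0) := by
          intro x hx
          by_cases hxe : x = h0
          · subst hxe
            rw [hGval x, hGh0]
            push_cast
            simp; ring
          · have := hrest x hx hxe
            rw [hGval x, this]
            simp [hxe]
        rw [Finset.sum_congr rfl this, Finset.sum_add_distrib, Finset.sum_ite_eq' T h0 (fun x => x),
          if_pos hh0T]
        congr 1
        rw [← Finset.sum_subset hST (fun x _ hxS => by rw [ind_apply_not_mem hxS]; simp)]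
        exact Finset.sum_congr rfl fun x hx => by rw [ind_apply_mem hx]; ring
      have hh0q : h0 = q := by
        have h01 : h0 ∈ Set.Ioo (0:ℝ) 1 := hsub hh0supp
        have hd : h0 - q = ((z - z0 : ℤ) : ℝ) := by
          rw [hz] at hwμ
          push_cast
          linarith [hwμ, hz0]
        have : (-1 : ℝ) < ((z - z0 : ℤ) : ℝ) := by
          rw [← hd]; rcases h01 with ⟨a,b⟩; rcases hq01 with ⟨c,d⟩; linarith
        have h2 : ((z - z0 : ℤ) : ℝ) < 1 := by
          rw [← hd]; rcases h01 with ⟨a,b⟩; rcases hq01 with ⟨c,d⟩; linarith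
        have hz1 : z - z0 = 0 := by
          have ha : (-1 : ℤ) < z - z0 := by exact_mod_cast this
          have hb : z - z0 < 1 := by exact_mod_cast h2
          omega
        have : h0 - q = 0 := by rw [hd, hz1]; simp
        linarith
      subst hh0q
      intro x
      by_cases hxq : x = h0
      · subst hxq
        rw [hGval x, hGh0, ind_apply_not_mem hqS, ind_apply_mem (Finset.mem_insert_self _ _)]
      · have hGx : G x = 0 := by
          by_cases hx : x ∈ T
          · exact hrest x hx hxq
          · have h1 : μ x = 0 := by
              by_contra hc
              exact hx (hsupT hc)
            have h2 : ind S x = 0 := ind_apply_not_mem (fun hs => hx (hST hs))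
            simp only [hG]; omega
        rw [hGval x, hGx, Nat.add_zero]
        by_cases hxS : x ∈ S
        · rw [ind_apply_mem hxS, ind_apply_mem (Finset.mem_insert_of_mem hxS)]
        · rw [ind_apply_not_mem hxS, ind_apply_not_mem (by
            simp [Finset.mem_insert, hxq, hxS])]
    exact funext hμeq

/-- the difference function -/
noncomputable def D (a b c x : ℝ) : ℝ :=
  ((1 - b) * x + min 0 (b - x)) + ((1 - a) * x + min 0 (a - x))
    - ((1 - c) * x + min 0 (c - x))

lemma D1_pos {a b x : ℝ} (ha : 0 < a) (hb : 0 < b) (hx0 : 0 < x) (hxq : x < a + b) :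
    0 < D a b (a + b) x := by
  unfold D; simp only [min_def]; split_ifs <;> linarith

lemma D1_zero {a b x : ℝ} (ha : 0 < a) (hb : 0 < b) (hxq : a + b ≤ x) :
    D a b (a + b) x = 0 := by
  unfold D; simp only [min_def]; split_ifs <;> linarith

lemma D2_pos {a b x : ℝ} (ha : a < 1) (hb : b < 1) (hx1 : x < 1) (hxq : a + b - 1 < x) :
    0 < D a b (a + b - 1) x := by
  unfold D; simp only [min_def]; split_ifs <;> linarith

lemma D2_zero {a b x : ℝ} (ha : a < 1) (hb : b < 1) (hxq : x ≤ a + b - 1) :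
    D a b (a + b - 1) x = 0 := by
  unfold D; simp only [min_def]; split_ifs <;> linarith


/-- Under genericity assumptions, the avalanche set — where the
limiting tropical polynomials for `n` and `n + 1` points differ — is the interval
`(0, qₙ)` if `p_{n+1} < qₙ`, and `(qₙ, 1)` if `p_{n+1} > qₙ`. -/
theorem avalanche_interval {n : ℕ} (p : Fin (n + 1) → ℝ)
    (hmem : ∀ i, p i ∈ Set.Ioo (0 : ℝ) 1) (hinj : Function.Injective p)
    (qn qn1 : ℝ)
    (hqn : qn = Int.fract (-(∑ i : Fin n, p i.castSucc)))
    (hqn1 : qn1 = Int.fract (-(∑ i, p i)))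
    (hgen : qn ≠ 0 ∧ ∀ i, qn ≠ p i)
    (hgen1 : qn1 ≠ 0 ∧ ∀ i, qn1 ≠ p i)
    (μn μn1 : ℝ → ℕ)
    (hμn : IsMinimalConfig (Set.range fun i : Fin n => p i.castSucc) μn)
    (hμn1 : IsMinimalConfig (Set.range p) μn1) :
    (p (Fin.last n) < qn →
      {x ∈ Set.Ioo (0 : ℝ) 1 | assocPoly μn x ≠ assocPoly μn1 x} = Set.Ioo 0 qn) ∧
    (qn < p (Fin.last n) →
      {x ∈ Set.Ioo (0 : ℝ) 1 | assocPoly μn x ≠ assocPoly μn1 x} = Set.Ioo qn 1) := by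
  set a := p (Fin.last n) with ha
  set Sn : Finset ℝ := Finset.image (fun i : Fin n => p i.castSucc) Finset.univ with hSn
  set Sn1 : Finset ℝ := Finset.image p Finset.univ with hSn1
  have hinjc : Function.Injective (fun i : Fin n => p i.castSucc) :=
    fun i j h => Fin.castSucc_injective n (hinj h)
  have hcoeSn : (↑Sn : Set ℝ) = Set.range (fun i : Fin n => p i.castSucc) := by
    simp [hSn]
  have hcoeSn1 : (↑Sn1 : Set ℝ) = Set.range p := by simp [hSn1]
  have hsumSn : ∑ h ∈ Sn, h = ∑ i : Fin n, p i.castSucc :=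
    Finset.sum_image fun i _ j _ h => hinjc h
  have hsumSn1 : ∑ h ∈ Sn1, h = ∑ i, p i :=
    Finset.sum_image fun i _ j _ h => hinj h
  have hq01 : qn ∈ Set.Ioo (0:ℝ) 1 := by
    refine ⟨lt_of_le_of_ne (by rw [hqn]; exact Int.fract_nonneg _) (Ne.symm hgen.1), ?_⟩
    rw [hqn]; exact Int.fract_lt_one _
  have hq101 : qn1 ∈ Set.Ioo (0:ℝ) 1 := by
    refine ⟨lt_of_le_of_ne (by rw [hqn1]; exact Int.fract_nonneg _) (Ne.symm hgen1.1), ?_⟩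
    rw [hqn1]; exact Int.fract_lt_one _
  have ha01 : a ∈ Set.Ioo (0:ℝ) 1 := hmem _
  have hqnSn : qn ∉ Sn := by
    intro h
    obtain ⟨i, _, hi⟩ := Finset.mem_image.mp h
    exact hgen.2 _ hi.symm
  have hqn1Sn1 : qn1 ∉ Sn1 := by
    intro h
    obtain ⟨i, _, hi⟩ := Finset.mem_image.mp h
    exact hgen1.2 _ hi.symm
  have haSn : a ∉ Sn := by
    intro h
    obtain ⟨i, _, hi⟩ := Finset.mem_image.mp h
    have := hinj hi
    exact (Fin.castSucc_lt_last i).ne this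
  have hSn1eq : Sn1 = insert a Sn := by
    ext x
    simp only [hSn1, hSn, Finset.mem_insert, Finset.mem_image, Finset.mem_univ, true_and]
    constructor
    · rintro ⟨i, rfl⟩
      rcases Fin.eq_castSucc_or_eq_last i with ⟨j, rfl⟩ | rfl
      · exact Or.inr ⟨j, rfl⟩
      · exact Or.inl rfl
    · rintro (rfl | ⟨j, rfl⟩)
      · exact ⟨Fin.last n, rfl⟩
      · exact ⟨j.castSucc, rfl⟩
  -- identify the minimal configurations
  have hμneq : μn = ind (insert qn Sn) := by
    apply minimal_eq Sn _ qn (by rw [hqn, hsumSn]) hgen.1 hqnSn μn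
    · rwa [hcoeSn]
    · rw [hcoeSn]
      rintro x ⟨i, rfl⟩
      exact hmem _
  have hμn1eq : μn1 = ind (insert qn1 Sn1) := by
    apply minimal_eq Sn1 _ qn1 (by rw [hqn1, hsumSn1]) hgen1.1 hqn1Sn1 μn1
    · rwa [hcoeSn1]
    · rw [hcoeSn1]
      rintro x ⟨i, rfl⟩
      exact hmem _
  -- the difference of the polynomials
  have hqn1Sn : qn1 ∉ insert a Sn := by rw [← hSn1eq]; exact hqn1Sn1
  have hdiff : ∀ x : ℝ, assocPoly μn1 x - assocPoly μn x = D a qn1 qn x := by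
    intro x
    rw [hμneq, hμn1eq, assocPoly_ind, assocPoly_ind, hSn1eq,
      Finset.sum_insert hqn1Sn, Finset.sum_insert haSn, Finset.sum_insert hqnSn]
    unfold D; ring
  -- relation between qn1 and qn
  have hfract : qn1 = Int.fract (qn - a) := by
    have h1 : -(∑ i, p i) = (qn - a) + (⌊-(∑ i : Fin n, p i.castSucc)⌋ : ℤ) := by
      rw [Fin.sum_univ_castSucc, hqn, Int.fract]
      ring
    rw [hqn1, h1, Int.fract_add_intCast]
  constructor
  · -- case a < qn
    intro hlt
    have hb : qn1 = qn - a := by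
      rw [hfract, Int.fract_eq_self.mpr ⟨by linarith, by linarith [hq01.2, ha01.1]⟩]
    have hqab : qn = a + qn1 := by rw [hb]; ring
    ext x
    simp only [Set.mem_setOf_eq, Set.mem_Ioo]
    constructor
    · rintro ⟨⟨hx0, hx1⟩, hne⟩
      refine ⟨hx0, ?_⟩
      by_contra hc
      push_neg at hc
      apply hne
      have := D1_zero (a := a) (b := qn1) ha01.1 hq101.1 (by linarith)
      have h2 := hdiff x
      rw [hqab] at h2
      linarith
    · rintro ⟨hx0, hxq⟩
      refine ⟨⟨hx0, by linarith [hq01.2]⟩, ?_⟩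
      have := D1_pos (a := a) (b := qn1) ha01.1 hq101.1 hx0 (by linarith)
      have h2 := hdiff x
      rw [hqab] at h2
      intro heq
      rw [heq] at h2
      linarith
  · -- case qn < a
    intro hlt
    have hb : qn1 = qn - a + 1 := by
      rw [hfract, show qn - a = (qn - a + 1) + ((-1 : ℤ) : ℝ) by push_cast; ring,
        Int.fract_add_intCast, Int.fract_eq_self.mpr ⟨by linarith [ha01.2, hq01.1], by linarith⟩]
      push_cast; ring
    have hqab : qn = a + qn1 - 1 := by rw [hb]; ring
    ext x
    simp only [Set.mem_setOf_eq, Set.mem_Ioo]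
    constructor
    · rintro ⟨⟨hx0, hx1⟩, hne⟩
      refine ⟨?_, hx1⟩
      by_contra hc
      push_neg at hc
      apply hne
      have := D2_zero (a := a) (b := qn1) ha01.2 hq101.2 (x := x) (by linarith)
      have h2 := hdiff x
      rw [hqab] at h2
      linarith
    · rintro ⟨hxq, hx1⟩
      refine ⟨⟨by linarith [hq01.1], hx1⟩, ?_⟩
      have := D2_pos (a := a) (b := qn1) ha01.2 hq101.2 hx1 (by linarith)
      have h2 := hdiff x
      rw [hqab] at h2
      intro heq
      rw [heq] at h2
      linarith
end
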